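/- arXiv:1207.4433 — 16 statements merged into one kernel-verified Lean document; each statement's English description precedes it below -/
import Mathlib

section
/- Let Z be a real topological vector space and C ⊆ Z a convex cone with 0 ∈ C. Then the family F(Z,C) = {A ⊆ Z : A = cl(A + C)}, partially ordered by A ≤ B ⟺ A ⊇ B, is a complete lattice. For every nonempty family 𝒜 ⊆ F(Z,C), the infimum of 𝒜 is cl(⋃_{A∈𝒜} A) and the supremum of 𝒜 is ⋂_{A∈𝒜} A; the infimum of the empty family is ∅ and the supremum of the empty family is Z. -/
open Set Pointwise Topology

private theorem closure_add_subset_closure_add {Z : Type*} [AddCommGroup Z] [TopologicalSpace Z]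
    [IsTopologicalAddGroup Z] (s t : Set Z) : closure s + t ⊆ closure (s + t) := by
  rintro x ⟨a, ha, b, hb, rfl⟩
  exact map_mem_closure (f := fun y => y + b) (continuous_add_right b) ha
    (fun y hy => add_mem_add hy hb)

private theorem subset_add_self {Z : Type*} [AddCommGroup Z] {C : Set Z} (hC0 : (0 : Z) ∈ C)
    (s : Set Z) : s ⊆ s + C := fun x hx => ⟨x, hx, 0, hC0, add_zero x⟩

/-- The family `F(Z,C) = {A ⊆ Z | A = cl(A + C)}`, partially ordered by reverse inclusion
`A ≤ B ⟺ A ⊇ B`, is a complete lattice: every nonempty family `𝒜 ⊆ F(Z,C)` has an infimum,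
namely `cl ⋃ 𝒜` (the greatest lower bound w.r.t. `≤`, i.e. the `⊇`-largest member of `F(Z,C)`
below every member of `𝒜`), and a supremum, namely `⋂ 𝒜`; the infimum of the empty family is
`∅` (the top element) and the supremum of the empty family is `Z` (the bottom element). -/
theorem F_is_complete_lattice {Z : Type*} [AddCommGroup Z] [Module ℝ Z] [TopologicalSpace Z]
    [IsTopologicalAddGroup Z] [ContinuousSMul ℝ Z]
    (C : Set Z) (hCconv : Convex ℝ C) (hCcone : ∀ t : ℝ, 0 < t → ∀ z ∈ C, t • z ∈ C)
    (hC0 : (0 : Z) ∈ C) :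
    (∀ 𝒜 ⊆ {A : Set Z | A = closure (A + C)}, 𝒜.Nonempty →
      -- infimum of a nonempty family is `cl ⋃ 𝒜`
      (closure (⋃₀ 𝒜) ∈ {A : Set Z | A = closure (A + C)} ∧
        (∀ A ∈ 𝒜, A ⊆ closure (⋃₀ 𝒜)) ∧
        (∀ B ∈ {A : Set Z | A = closure (A + C)},
          (∀ A ∈ 𝒜, A ⊆ B) → closure (⋃₀ 𝒜) ⊆ B)) ∧
      -- supremum of a nonempty family is `⋂ 𝒜`
      ((⋂₀ 𝒜) ∈ {A : Set Z | A = closure (A + C)} ∧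
        (∀ A ∈ 𝒜, ⋂₀ 𝒜 ⊆ A) ∧
        (∀ B ∈ {A : Set Z | A = closure (A + C)},
          (∀ A ∈ 𝒜, B ⊆ A) → B ⊆ ⋂₀ 𝒜))) ∧
    -- infimum of the empty family is `∅`, the greatest element w.r.t. `≤` (= `⊇`)
    ((∅ : Set Z) ∈ {A : Set Z | A = closure (A + C)} ∧
      ∀ B ∈ {A : Set Z | A = closure (A + C)}, (∅ : Set Z) ⊆ B) ∧
    -- supremum of the empty family is `Z`, the least element w.r.t. `≤` (= `⊇`)
    ((univ : Set Z) ∈ {A : Set Z | A = closure (A + C)} ∧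
      ∀ B ∈ {A : Set Z | A = closure (A + C)}, B ⊆ (univ : Set Z)) := by
  refine ⟨fun 𝒜 h𝒜 _h𝒜ne => ?_, ⟨?_, fun B _ => empty_subset B⟩,
    ⟨?_, fun B _ => subset_univ B⟩⟩
  · constructor
    · have h1 : ⋃₀ 𝒜 + C ⊆ closure (⋃₀ 𝒜) := by
        rintro x ⟨a, ha, b, hb, rfl⟩
        obtain ⟨A, hA, haA⟩ := ha
        have : a + b ∈ closure (A + C) := subset_closure (add_mem_add haA hb)
        rw [← h𝒜 hA] at this
        exact subset_closure ⟨A, hA, this⟩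
      have hkey : closure (⋃₀ 𝒜) + C ⊆ closure (⋃₀ 𝒜) := calc
        closure (⋃₀ 𝒜) + C ⊆ closure (⋃₀ 𝒜 + C) := closure_add_subset_closure_add _ _
        _ ⊆ closure (closure (⋃₀ 𝒜)) := closure_mono h1
        _ = closure (⋃₀ 𝒜) := closure_closure
      refine ⟨Subset.antisymm ?_ ?_, fun A hA => (subset_sUnion_of_mem hA).trans subset_closure,
        fun B hB hall => ?_⟩
      · exact (subset_add_self hC0 _).trans subset_closure
      · exact closure_minimal hkey isClosed_closure
      · have : ⋃₀ 𝒜 ⊆ B := sUnion_subset hall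
        calc closure (⋃₀ 𝒜) ⊆ closure B := closure_mono this
          _ = closure (closure (B + C)) := by rw [← hB]
          _ = closure (B + C) := closure_closure
          _ = B := hB.symm
    · refine ⟨Subset.antisymm ((subset_add_self hC0 _).trans subset_closure) ?_,
        fun A hA => sInter_subset_of_mem hA, fun B _ hall => subset_sInter hall⟩
      refine subset_sInter fun A hA => ?_
      calc closure (⋂₀ 𝒜 + C) ⊆ closure (A + C) :=
            closure_mono (add_subset_add_right (sInter_subset_of_mem hA))
        _ = A := (h𝒜 hA).symm
  · show (∅ : Set Z) = closure (∅ + C)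
    simp
  · show (univ : Set Z) = closure (univ + C)
    rw [Subset.antisymm (subset_univ _) (subset_add_self hC0 _), closure_univ]
end

section
/- Let Z be a real topological vector space and C ⊆ Z a convex cone with 0 ∈ C. Then the family G(Z,C) = {A ⊆ Z : A = cl(co(A + C))}, partially ordered by A ≤ B ⟺ A ⊇ B, is a complete lattice. For every nonempty family ℬ ⊆ G(Z,C), the infimum of ℬ is cl(co(⋃_{B∈ℬ} B)) and the supremum of ℬ is ⋂_{B∈ℬ} B; the infimum of the empty family is ∅ and the supremum of the empty family is Z. -/
open Set Pointwise Topology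

section aux

variable {Z : Type*} [AddCommGroup Z] [Module ℝ Z] [TopologicalSpace Z]
    [IsTopologicalAddGroup Z] [ContinuousSMul ℝ Z]

lemma G_mem_iff' (C : Set Z) (hC0 : (0 : Z) ∈ C) {A : Set Z}
    (hclosed : IsClosed A) (hconv : Convex ℝ A) (hadd : A + C ⊆ A) :
    A = closure (convexHull ℝ (A + C)) := by
  apply Subset.antisymm
  · intro x hx
    exact subset_closure (subset_convexHull ℝ _ ⟨x, hx, 0, hC0, add_zero x⟩)
  · calc closure (convexHull ℝ (A + C)) ⊆ closure (convexHull ℝ A) :=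
          closure_mono (convexHull_mono hadd)
      _ = closure A := by rw [hconv.convexHull_eq]
      _ = A := hclosed.closure_eq

lemma G_add_subset (C : Set Z) {A : Set Z}
    (hA : A = closure (convexHull ℝ (A + C))) : A + C ⊆ A := by
  calc A + C ⊆ convexHull ℝ (A + C) := subset_convexHull ℝ _
    _ ⊆ closure (convexHull ℝ (A + C)) := subset_closure
    _ = A := hA.symm

lemma G_closed (C : Set Z) {A : Set Z}
    (hA : A = closure (convexHull ℝ (A + C))) : IsClosed A := by
  rw [hA]; exact isClosed_closure

lemma G_convex (C : Set Z) {A : Set Z}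
    (hA : A = closure (convexHull ℝ (A + C))) : Convex ℝ A := by
  rw [hA]; exact (convex_convexHull ℝ _).closure

end aux

/-- The family `G(Z,C) = {A ⊆ Z | A = cl(co(A + C))}`, partially ordered by reverse inclusion
`A ≤ B ⟺ A ⊇ B`, is a complete lattice: every nonempty family `𝒜 ⊆ G(Z,C)` has an infimum,
namely `cl co ⋃ 𝒜` (the greatest lower bound w.r.t. `≤`, i.e. the `⊇`-largest member of `G(Z,C)`
below every member of `𝒜`), and a supremum, namely `⋂ 𝒜`; the infimum of the empty family is
`∅` (the top element) and the supremum of the empty family is `Z` (the bottom element). -/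
theorem G_is_complete_lattice {Z : Type*} [AddCommGroup Z] [Module ℝ Z] [TopologicalSpace Z]
    [IsTopologicalAddGroup Z] [ContinuousSMul ℝ Z]
    (C : Set Z) (hCconv : Convex ℝ C) (hCcone : ∀ t : ℝ, 0 < t → ∀ z ∈ C, t • z ∈ C)
    (hC0 : (0 : Z) ∈ C) :
    (∀ 𝒜 ⊆ {A : Set Z | A = closure (convexHull ℝ (A + C))}, 𝒜.Nonempty →
      -- infimum of a nonempty family is `cl co ⋃ 𝒜`
      (closure (convexHull ℝ (⋃₀ 𝒜)) ∈ {A : Set Z | A = closure (convexHull ℝ (A + C))} ∧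
        (∀ A ∈ 𝒜, A ⊆ closure (convexHull ℝ (⋃₀ 𝒜))) ∧
        (∀ B ∈ {A : Set Z | A = closure (convexHull ℝ (A + C))},
          (∀ A ∈ 𝒜, A ⊆ B) → closure (convexHull ℝ (⋃₀ 𝒜)) ⊆ B)) ∧
      -- supremum of a nonempty family is `⋂ 𝒜`
      ((⋂₀ 𝒜) ∈ {A : Set Z | A = closure (convexHull ℝ (A + C))} ∧
        (∀ A ∈ 𝒜, ⋂₀ 𝒜 ⊆ A) ∧
        (∀ B ∈ {A : Set Z | A = closure (convexHull ℝ (A + C))},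
          (∀ A ∈ 𝒜, B ⊆ A) → B ⊆ ⋂₀ 𝒜))) ∧
    -- infimum of the empty family is `∅`, the greatest element w.r.t. `≤` (= `⊇`)
    ((∅ : Set Z) ∈ {A : Set Z | A = closure (convexHull ℝ (A + C))} ∧
      ∀ B ∈ {A : Set Z | A = closure (convexHull ℝ (A + C))}, (∅ : Set Z) ⊆ B) ∧
    -- supremum of the empty family is `Z`, the least element w.r.t. `≤` (= `⊇`)
    ((univ : Set Z) ∈ {A : Set Z | A = closure (convexHull ℝ (A + C))} ∧
      ∀ B ∈ {A : Set Z | A = closure (convexHull ℝ (A + C))}, B ⊆ (univ : Set Z)) := by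
  refine ⟨?_, ⟨?_, fun B _ => empty_subset B⟩, ⟨?_, fun B _ => subset_univ B⟩⟩
  · intro 𝒜 h𝒜 hne
    -- union of members is stable under + C
    have hUadd : ⋃₀ 𝒜 + C ⊆ ⋃₀ 𝒜 := by
      rintro x ⟨a, ha, c, hc, rfl⟩
      obtain ⟨A, hA, haA⟩ := ha
      exact ⟨A, hA, G_add_subset C (h𝒜 hA) ⟨a, haA, c, hc, rfl⟩⟩
    set S := closure (convexHull ℝ (⋃₀ 𝒜)) with hS
    have hSadd : S + C ⊆ S := by
      rintro x ⟨s, hs, c, hc, rfl⟩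
      have hmap : MapsTo (· + c) (convexHull ℝ (⋃₀ 𝒜)) (convexHull ℝ (⋃₀ 𝒜)) := by
        intro y hy
        have : y + c ∈ convexHull ℝ (⋃₀ 𝒜) + convexHull ℝ C :=
          ⟨y, hy, c, subset_convexHull ℝ _ hc, rfl⟩
        rw [← convexHull_add] at this
        exact convexHull_mono hUadd this
      have := map_mem_closure (continuous_add_right c) hs hmap
      exact this
    refine ⟨⟨?_, ?_, ?_⟩, ?_, fun A hA => sInter_subset_of_mem hA, ?_⟩
    · exact G_mem_iff' C hC0 isClosed_closure ((convex_convexHull ℝ _).closure) hSadd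
    · exact fun A hA => (subset_sUnion_of_mem hA).trans
        ((subset_convexHull ℝ _).trans subset_closure)
    · intro B hB hub
      have hBclosed := G_closed C hB
      have hBconv := G_convex C hB
      calc closure (convexHull ℝ (⋃₀ 𝒜)) ⊆ closure (convexHull ℝ B) :=
            closure_mono (convexHull_mono (sUnion_subset hub))
        _ = closure B := by rw [hBconv.convexHull_eq]
        _ = B := hBclosed.closure_eq
    · -- ⋂₀ 𝒜 ∈ G
      have hIadd : ⋂₀ 𝒜 + C ⊆ ⋂₀ 𝒜 := by
        rintro x ⟨a, ha, c, hc, rfl⟩ A hA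
        exact G_add_subset C (h𝒜 hA) ⟨a, ha A hA, c, hc, rfl⟩
      refine G_mem_iff' C hC0 ?_ ?_ hIadd
      · exact isClosed_sInter fun A hA => G_closed C (h𝒜 hA)
      · exact convex_sInter fun A hA => G_convex C (h𝒜 hA)
    · exact fun B hB hlb => subset_sInter hlb
  · show (∅ : Set Z) = closure (convexHull ℝ (∅ + C))
    rw [Set.empty_add, convexHull_empty, closure_empty]
  · show (univ : Set Z) = closure (convexHull ℝ (univ + C))
    have : (univ : Set Z) + C = univ := by
      apply Subset.antisymm (subset_univ _)
      intro x _
      exact ⟨x, mem_univ x, 0, hC0, add_zero x⟩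
    rw [this, convexHull_univ, closure_univ]
end

section
/- Let Y and Z be real topological vector spaces, C ⊆ Z a convex cone with 0 ∈ C, y* a continuous linear functional on Y, and z* a continuous linear functional on Z. Then the set-valued map S_{(y*,z*)} : Y → P(Z), defined by S_{(y*,z*)}(y) = {z ∈ Z : y*(y) ≤ z*(z)}, satisfies S_{(y*,z*)}(y) ∈ G(Z,C) for every y ∈ Y if and only if z* ∈ C+. -/
open Set Pointwise Topology

/-- For continuous linear functionals `y*` on `Y` and `z*` on `Z`, the set-valued map
`S_{(y*,z*)}(y) = {z | y*(y) ≤ z*(z)}` takes all its values in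
`G(Z,C) = {A | A = cl co (A + C)}` if and only if `z* ∈ C⁺`. -/
theorem SMap_mem_G_iff {Y Z : Type*}
    [AddCommGroup Y] [Module ℝ Y] [TopologicalSpace Y] [IsTopologicalAddGroup Y]
    [ContinuousSMul ℝ Y]
    [AddCommGroup Z] [Module ℝ Z] [TopologicalSpace Z] [IsTopologicalAddGroup Z]
    [ContinuousSMul ℝ Z]
    (C : Set Z) (hCconv : Convex ℝ C) (hCcone : ∀ t : ℝ, 0 < t → ∀ z ∈ C, t • z ∈ C)
    (hC0 : (0 : Z) ∈ C) (y' : Y →L[ℝ] ℝ) (z' : Z →L[ℝ] ℝ) :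
    (∀ y : Y, {z : Z | y' y ≤ z' z} ∈ {A : Set Z | A = closure (convexHull ℝ (A + C))})
      ↔ (∀ z ∈ C, 0 ≤ z' z) := by
  constructor
  · intro h z hz
    have h0 := h 0
    simp only [mem_setOf_eq, map_zero] at h0
    by_contra hneg
    push_neg at hneg
    have hmem : z ∈ {z : Z | (0:ℝ) ≤ z' z} + C := by
      refine ⟨0, by simp, z, hz, by simp⟩
    have : z ∈ {z : Z | (0:ℝ) ≤ z' z} := by
      rw [h0]
      exact subset_closure (subset_convexHull ℝ _ hmem)
    exact absurd this (by simpa using hneg)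
  · intro hC y
    set A : Set Z := {z : Z | y' y ≤ z' z} with hA
    have hAC : A + C = A := by
      apply Subset.antisymm
      · rintro x ⟨a, ha, c, hc, rfl⟩
        have : (0:ℝ) ≤ z' c := hC c hc
        simp only [hA, mem_setOf_eq, map_add] at ha ⊢
        linarith
      · intro a ha
        exact ⟨a, ha, 0, hC0, by simp⟩
    have hconv : Convex ℝ A := by
      intro u hu v hv a b ha hb hab
      simp only [hA, mem_setOf_eq, map_add, map_smul, smul_eq_mul] at hu hv ⊢
      calc y' y = a * y' y + b * y' y := by rw [← add_mul, hab, one_mul]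
        _ ≤ a * z' u + b * z' v :=
          add_le_add (mul_le_mul_of_nonneg_left hu ha) (mul_le_mul_of_nonneg_left hv hb)
    have hclosed : IsClosed A := isClosed_le continuous_const z'.continuous
    simp only [mem_setOf_eq]
    rw [hAC, hconv.convexHull_eq, hclosed.closure_eq]
end

section
/- (Reconstruction of the primal.) Assume C+ ≠ {0}, and let f : X → P(Z) and g : X → P(Y) satisfy f(x) ∈ G(Z,C), g(x) ∈ G(Y,D) and f(x) ≠ Z for every x ∈ X. Then for every x ∈ X: ⋂_{(y*,z*) ∈ Y*×(C+∖{0})} l(x,y*,z*) = f(x) if 0 ∈ g(x), and ⋂_{(y*,z*) ∈ Y*×(C+∖{0})} l(x,y*,z*) = ∅ if 0 ∉ g(x). -/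
open Set Pointwise Topology Filter

noncomputable section

variable {X Y Z : Type*}
  [AddCommGroup X] [Module ℝ X] [TopologicalSpace X] [IsTopologicalAddGroup X]
  [ContinuousSMul ℝ X] [LocallyConvexSpace ℝ X]
  [AddCommGroup Y] [Module ℝ Y] [TopologicalSpace Y] [IsTopologicalAddGroup Y]
  [ContinuousSMul ℝ Y] [LocallyConvexSpace ℝ Y]
  [AddCommGroup Z] [Module ℝ Z] [TopologicalSpace Z] [IsTopologicalAddGroup Z]
  [ContinuousSMul ℝ Z] [LocallyConvexSpace ℝ Z]

/-- The positive dual cone `C⁺`. -/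
def posDual (C : Set Z) : Set (Z →L[ℝ] ℝ) := {z' | ∀ z ∈ C, 0 ≤ z' z}

/-- The halfspace `S(z*) = {z | 0 ≤ z*(z)}`. -/
def SPos (z' : Z →L[ℝ] ℝ) : Set Z := {z | 0 ≤ z' z}

/-- `S_{(y*,z*)}(y) = {z | y*(y) ≤ z*(z)}`. -/
def SMap (y' : Y →L[ℝ] ℝ) (z' : Z →L[ℝ] ℝ) (y : Y) : Set Z := {z | y' y ≤ z' z}

/-- Scalarization: `inf {z*(z) | z ∈ A}` in `EReal` (inf ∅ = +∞). -/
def scal (z' : Z →L[ℝ] ℝ) (A : Set Z) : EReal := ⨅ z ∈ A, (z' z : EReal)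

open Classical in
/-- Addition on `EReal` with the convention `(+∞) + (−∞) = (−∞) + (+∞) = +∞`. -/
def eadd (a b : EReal) : EReal := if a = ⊤ ∨ b = ⊤ then ⊤ else a + b

/-- The set-valued Lagrangian `l(x,y*,z*) = f(x) ⊕ cl ⋃_{y ∈ g(x)} S_{(y*,z*)}(y)`. -/
def lag (f : X → Set Z) (g : X → Set Y) (x : X) (y' : Y →L[ℝ] ℝ) (z' : Z →L[ℝ] ℝ) :
    Set Z :=
  closure (f x + closure (⋃ y ∈ g x, SMap y' z' y))

/-- The dual objective `h(y*,z*) = cl ⋃_x l(x,y*,z*)`. -/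
def dualObj (f : X → Set Z) (g : X → Set Y) (y' : Y →L[ℝ] ℝ) (z' : Z →L[ℝ] ℝ) : Set Z :=
  closure (⋃ x, lag f g x y' z')

/-- The value function `v(y) = cl ⋃ {f(x) | y ∈ g(x)}`. -/
def valFn (f : X → Set Z) (g : X → Set Y) (y : Y) : Set Z :=
  closure (⋃ x ∈ {x | y ∈ g x}, f x)

/-- Separation lemma: a point outside a nonempty set of the form `cl co (A + C)` can be
strictly separated by a functional in the positive dual cone of `C`. -/
lemma sep_lemma {C : Set Z} (hCcone : ∀ t : ℝ, 0 < t → ∀ z ∈ C, t • z ∈ C)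
    {A : Set Z} (hA : A = closure (convexHull ℝ (A + C))) (hAne : A.Nonempty)
    {z₀ : Z} (hz₀ : z₀ ∉ A) :
    ∃ z' : Z →L[ℝ] ℝ, ∃ u : ℝ, z' z₀ < u ∧ (∀ a ∈ A, u < z' a) ∧ z' ∈ posDual C := by
  have hclosed : IsClosed A := by rw [hA]; exact isClosed_closure
  have hconv : Convex ℝ A := by rw [hA]; exact (convex_convexHull ℝ _).closure
  obtain ⟨z', u, h1, h2⟩ := geometric_hahn_banach_point_closed hconv hclosed hz₀
  refine ⟨z', u, h1, h2, fun c hc => ?_⟩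
  by_contra hneg
  push_neg at hneg
  obtain ⟨a, ha⟩ := hAne
  have hsub : A + C ⊆ A := fun w hw =>
    hA ▸ subset_closure (subset_convexHull ℝ _ hw)
  set t : ℝ := (z' a - u + 1) / (-z' c) with ht_def
  have ht : 0 < t := div_pos (by linarith [h2 a ha]) (by linarith)
  have hmem : a + t • c ∈ A := hsub (add_mem_add ha (hCcone t ht c hc))
  have hval : z' (a + t • c) = z' a + t * z' c := by
    rw [map_add, map_smul]; rfl
  have hcancel : t * (-(z' c)) = z' a - u + 1 :=
    div_mul_cancel₀ _ (by linarith : -(z' c) ≠ 0)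
  rw [mul_neg] at hcancel
  have := h2 _ hmem
  rw [hval] at this
  linarith

/-- **Reconstruction of the primal.** If `C⁺ ≠ {0}`, `f(x) ∈ G(Z,C)`, `g(x) ∈ G(Y,D)` and
`f(x) ≠ Z` for all `x`, then the supremum (intersection) of the Lagrangian over all dual
variables `(y*,z*) ∈ Y* × (C⁺∖{0})` equals `f(x)` if `0 ∈ g(x)` and `∅` otherwise. -/
theorem reconstruction_of_primal
    (C : Set Z) (hCconv : Convex ℝ C) (hCcone : ∀ t : ℝ, 0 < t → ∀ z ∈ C, t • z ∈ C)
    (hC0 : (0 : Z) ∈ C)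
    (D : Set Y) (hDconv : Convex ℝ D) (hDcone : ∀ t : ℝ, 0 < t → ∀ y ∈ D, t • y ∈ D)
    (hD0 : (0 : Y) ∈ D)
    (hCplus : posDual C ≠ {0})
    (f : X → Set Z) (g : X → Set Y)
    (hfG : ∀ x, f x = closure (convexHull ℝ (f x + C)))
    (hgG : ∀ x, g x = closure (convexHull ℝ (g x + D)))
    (hfZ : ∀ x, f x ≠ univ) :
    ∀ x : X,
      ((0 : Y) ∈ g x →
        (⋂ (y' : Y →L[ℝ] ℝ), ⋂ z' ∈ posDual C \ {0}, lag f g x y' z') = f x) ∧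
      ((0 : Y) ∉ g x →
        (⋂ (y' : Y →L[ℝ] ℝ), ⋂ z' ∈ posDual C \ {0}, lag f g x y' z') = ∅) := by
  -- a nonzero element of the dual cone
  have h0dual : (0 : Z →L[ℝ] ℝ) ∈ posDual C := fun z _ => by simp
  have hex : ∃ w' ∈ posDual C, w' ≠ 0 := by
    by_contra h
    push_neg at h
    exact hCplus (Subset.antisymm (fun z' hz' => (h z' hz'))
      (fun z' hz' => by rw [mem_singleton_iff] at hz'; subst hz'; exact h0dual))
  obtain ⟨w', hw'pos, hw'ne⟩ := hex
  have hw'mem : w' ∈ posDual C \ {0} := ⟨hw'pos, by simpa using hw'ne⟩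
  intro x
  have hlagf : f x = ∅ → ∀ y' z', lag f g x y' z' = ∅ := by
    intro h y' z'; simp [lag, h]
  have hlagg : g x = ∅ → ∀ y' z', lag f g x y' z' = ∅ := by
    intro h y' z'; simp [lag, h]
  -- bound lemma
  have hbound : ∀ (y' : Y →L[ℝ] ℝ) (z' : Z →L[ℝ] ℝ) (uA uB : ℝ),
      (∀ a ∈ f x, uA ≤ z' a) → (∀ y ∈ g x, uB ≤ y' y) →
      lag f g x y' z' ⊆ {w | uA + uB ≤ z' w} := by
    intro y' z' uA uB hA hB
    have hcl2 : IsClosed {w : Z | uB ≤ z' w} :=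
      isClosed_le continuous_const z'.continuous
    have h1 : (⋃ y ∈ g x, SMap y' z' y) ⊆ {w | uB ≤ z' w} := by
      intro w hw
      simp only [mem_iUnion, SMap, mem_setOf_eq, exists_prop] at hw
      obtain ⟨y, hy, hw⟩ := hw
      exact le_trans (hB y hy) hw
    have h2 : closure (⋃ y ∈ g x, SMap y' z' y) ⊆ {w | uB ≤ z' w} :=
      closure_minimal h1 hcl2
    refine closure_minimal ?_ (isClosed_le continuous_const z'.continuous)
    rintro w ⟨a, ha, s, hs, rfl⟩
    simp only [mem_setOf_eq, map_add]
    exact add_le_add (hA a ha) (h2 hs)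
  constructor
  · -- case 0 ∈ g x
    intro h0
    apply Subset.antisymm
    · intro z hz
      simp only [mem_iInter, mem_diff, mem_singleton_iff] at hz
      by_contra hznA
      by_cases hfe : f x = ∅
      · have := hz 0 w' ⟨hw'pos, hw'ne⟩
        rw [hlagf hfe 0 w'] at this
        exact this
      · obtain ⟨z', u, h1, h2, h3⟩ :=
          sep_lemma hCcone (hfG x) (nonempty_iff_ne_empty.mpr hfe) hznA
        have hz'ne : z' ≠ 0 := by
          intro h
          obtain ⟨a, ha⟩ := nonempty_iff_ne_empty.mpr hfe
          have hua := h2 a ha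
          subst h
          simp only [ContinuousLinearMap.zero_apply] at h1 hua
          linarith
        have hmem := hz 0 z' ⟨h3, hz'ne⟩
        have := hbound 0 z' u 0 (fun a ha => (h2 a ha).le)
          (fun y _ => by simp) hmem
        simp only [mem_setOf_eq, add_zero] at this
        linarith
    · intro z hzA
      simp only [mem_iInter, mem_diff, mem_singleton_iff]
      intro y' z' _ _
      apply subset_closure
      have h0S : (0 : Z) ∈ closure (⋃ y ∈ g x, SMap y' z' y) :=
        subset_closure (mem_biUnion h0 (by simp [SMap]))
      have := Set.add_mem_add hzA h0S
      simpa using this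
  · -- case 0 ∉ g x
    intro h0
    rw [Set.eq_empty_iff_forall_notMem]
    intro z hz
    simp only [mem_iInter, mem_diff, mem_singleton_iff] at hz
    by_cases hfe : f x = ∅
    · have := hz 0 w' ⟨hw'pos, hw'ne⟩
      rw [hlagf hfe 0 w'] at this; exact this
    by_cases hge : g x = ∅
    · have := hz 0 w' ⟨hw'pos, hw'ne⟩
      rw [hlagg hge 0 w'] at this; exact this
    have hfne : (f x).Nonempty := nonempty_iff_ne_empty.mpr hfe
    obtain ⟨w, hw⟩ : ∃ w, w ∉ f x := by
      by_contra h
      push_neg at h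
      exact hfZ x (eq_univ_of_forall h)
    obtain ⟨z', uA, h1, h2, h3⟩ := sep_lemma hCcone (hfG x) hfne hw
    have hz'ne : z' ≠ 0 := by
      intro h
      obtain ⟨a, ha⟩ := hfne
      have hua := h2 a ha
      subst h
      simp only [ContinuousLinearMap.zero_apply] at h1 hua
      linarith
    -- separate 0 from g x
    have hgclosed : IsClosed (g x) := by rw [hgG x]; exact isClosed_closure
    have hgconv : Convex ℝ (g x) := by rw [hgG x]; exact (convex_convexHull ℝ _).closure
    obtain ⟨y', uB, hy1, hy2⟩ := geometric_hahn_banach_point_closed hgconv hgclosed h0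
    have huB : 0 < uB := by simpa using hy1
    obtain ⟨n, hn⟩ := exists_nat_gt ((z' z - uA) / uB)
    have hkey := hbound ((n : ℝ) • y') z' uA ((n : ℝ) * uB)
      (fun a ha => (h2 a ha).le)
      (fun y hy => by
        simp only [ContinuousLinearMap.smul_apply, smul_eq_mul]
        exact mul_le_mul_of_nonneg_left (hy2 y hy).le n.cast_nonneg)
      (hz ((n : ℝ) • y') z' ⟨h3, hz'ne⟩)
    simp only [mem_setOf_eq] at hkey
    have : z' z - uA < n * uB := (div_lt_iff₀ huB).mp hn
    linarith
end
end

section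
/- Assume C+ ≠ {0} and let f : X → P(Z) be a convex set-valued map (its graph {(x,z) : z ∈ f(x)} is convex) with f(x) ∈ F(Z,C) for all x ∈ X. Then f(x) ∈ G(Z,C) for every x ∈ X, and for every x ∈ X: f(x) = ⋂_{z* ∈ C+∖{0}} {z ∈ Z : φ_{f,z*}(x) ≤ z*(z)}. -/
open Set Pointwise Topology Filter

noncomputable section

variable {X Y Z : Type*}
  [AddCommGroup X] [Module ℝ X] [TopologicalSpace X] [IsTopologicalAddGroup X]
  [ContinuousSMul ℝ X] [LocallyConvexSpace ℝ X]
  [AddCommGroup Y] [Module ℝ Y] [TopologicalSpace Y] [IsTopologicalAddGroup Y]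
  [ContinuousSMul ℝ Y] [LocallyConvexSpace ℝ Y]
  [AddCommGroup Z] [Module ℝ Z] [TopologicalSpace Z] [IsTopologicalAddGroup Z]
  [ContinuousSMul ℝ Z] [LocallyConvexSpace ℝ Z]

/-- If `C⁺ ≠ {0}` and `f : X → P(Z)` is a convex set-valued map (its graph is convex) with
`f(x) ∈ F(Z,C)` for all `x`, then `f(x) ∈ G(Z,C)` for all `x`, and
`f(x) = ⋂_{z* ∈ C⁺∖{0}} {z | φ_{f,z*}(x) ≤ z*(z)}`. -/
theorem scalarization_representation
    (C : Set Z) (hCconv : Convex ℝ C) (hCcone : ∀ t : ℝ, 0 < t → ∀ z ∈ C, t • z ∈ C)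
    (hC0 : (0 : Z) ∈ C) (hCplus : posDual C ≠ {0})
    (f : X → Set Z)
    (hconv : Convex ℝ {q : X × Z | q.2 ∈ f q.1})
    (hfF : ∀ x, f x = closure (f x + C)) :
    ∀ x : X,
      f x = closure (convexHull ℝ (f x + C)) ∧
      f x = ⋂ z' ∈ posDual C \ {0}, {z : Z | scal z' (f x) ≤ (z' z : EReal)} := by

  intro x
  have hfxconv : Convex ℝ (f x) := by
    intro z1 h1 z2 h2 a b ha hb hab
    have h := hconv (show ((x, z1) : X × Z) ∈ _ from h1)
      (show ((x, z2) : X × Z) ∈ _ from h2) ha hb hab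
    have hx : a • x + b • x = x := by rw [← add_smul, hab, one_smul]
    simpa [hx] using h
  have hclosed : IsClosed (f x) := by rw [hfF x]; exact isClosed_closure
  have hsub : f x + C ⊆ f x :=
    (subset_closure : f x + C ⊆ closure (f x + C)).trans (hfF x).symm.subset
  obtain ⟨w', hw'mem, hw'ne⟩ : ∃ w' ∈ posDual C, w' ≠ 0 := by
    by_contra h
    push_neg at h
    apply hCplus
    apply Subset.antisymm
    · intro w hw; exact h w hw
    · intro w hw
      simp only [mem_singleton_iff] at hw
      subst hw
      intro z hz
      simp
  refine ⟨?_, ?_⟩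
  · rw [convexHull_eq_self.mpr (hfxconv.add hCconv)]
    exact hfF x
  · apply Subset.antisymm
    · intro z hz
      apply mem_iInter₂.mpr
      intro z' hz'
      show scal z' (f x) ≤ (z' z : EReal)
      exact iInf₂_le z hz
    · intro z hz
      by_contra hzf
      rcases eq_empty_or_nonempty (f x) with hemp | ⟨w₀, hw₀⟩
      · have h := mem_iInter₂.mp hz w' ⟨hw'mem, hw'ne⟩
        have h2 : scal w' (f x) ≤ (w' z : EReal) := h
        rw [hemp] at h2
        simp only [scal, mem_empty_iff_false, iInf_false, iInf_top, iInf_emptyset] at h2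
        exact (EReal.coe_ne_top (w' z)) (top_le_iff.mp h2)
      · obtain ⟨z', u, hz'z, hsep⟩ :=
          geometric_hahn_banach_point_closed hfxconv hclosed hzf
        have hz'C : z' ∈ posDual C := by
          intro c hc
          by_contra hneg
          push_neg at hneg
          set t : ℝ := (z' w₀ - u + 1) / (-(z' c)) with ht
          have htpos : 0 < t := by
            apply div_pos
            · linarith [hsep w₀ hw₀]
            · linarith
          have hmem : w₀ + t • c ∈ f x := hsub ⟨w₀, hw₀, t • c, hCcone t htpos c hc, rfl⟩
          have := hsep _ hmem
          rw [map_add, map_smul] at this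
          have hne : z' c ≠ 0 := ne_of_lt hneg
          have h1 : t * z' c = -(z' w₀ - u + 1) := by
            rw [ht, div_neg, neg_mul, div_mul_cancel₀ _ hne]
          simp only [smul_eq_mul] at this
          rw [h1] at this
          linarith
        have hz'ne : z' ≠ 0 := by
          intro h0
          rw [h0] at hz'z hsep
          have := hsep w₀ hw₀
          simp at hz'z this
          linarith
        have hle := mem_iInter₂.mp hz z' ⟨hz'C, hz'ne⟩
        simp only [mem_setOf_eq] at hle
        have hscal : (u : EReal) ≤ scal z' (f x) := by
          apply le_iInf₂
          intro w hw
          exact_mod_cast (hsep w hw).le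
        have : (u : EReal) ≤ (z' z : EReal) := hscal.trans hle
        have : u ≤ z' z := by exact_mod_cast this
        linarith
end
end

section
/- (Scalarization and conjugation commute.) Let f : X → P(Z) be any set-valued map, x* ∈ X* and z* ∈ C+∖{0}. Then: (i) −φ*_{f,z*}(x*) = inf{z*(z) : z ∈ −f*(x*,z*)}, and (ii) −f*(x*,z*) = {z ∈ Z : −φ*_{f,z*}(x*) ≤ z*(z)}, where −φ*_{f,z*}(x*) = inf_{x ∈ X} [φ_{f,z*}(x) − x*(x)] is the negative of the classical Fenchel conjugate of φ_{f,z*} (with the conventions that the set in (ii) is ∅ if −φ*_{f,z*}(x*) = +∞ and Z if −φ*_{f,z*}(x*) = −∞). -/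
open Set Pointwise Topology Filter

noncomputable section

variable {X Y Z : Type*}
  [AddCommGroup X] [Module ℝ X] [TopologicalSpace X] [IsTopologicalAddGroup X]
  [ContinuousSMul ℝ X] [LocallyConvexSpace ℝ X]
  [AddCommGroup Y] [Module ℝ Y] [TopologicalSpace Y] [IsTopologicalAddGroup Y]
  [ContinuousSMul ℝ Y] [LocallyConvexSpace ℝ Y]
  [AddCommGroup Z] [Module ℝ Z] [TopologicalSpace Z] [IsTopologicalAddGroup Z]
  [ContinuousSMul ℝ Z] [LocallyConvexSpace ℝ Z]

/-- The (negative) Fenchel conjugate `−f*(x*,z*) = cl ⋃_x [f(x) + S_{(x*,z*)}(−x)]`. -/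
def negConj (f : X → Set Z) (x' : X →L[ℝ] ℝ) (z' : Z →L[ℝ] ℝ) : Set Z :=
  closure (⋃ x, (f x + SMap x' z' (-x)))

/-- **Scalarization and conjugation commute.** For any set-valued `f : X → P(Z)`, `x* ∈ X*`
and `z* ∈ C⁺∖{0}`:
(i) `−φ*_{f,z*}(x*) = inf {z*(z) | z ∈ −f*(x*,z*)}`, and
(ii) `−f*(x*,z*) = {z | −φ*_{f,z*}(x*) ≤ z*(z)}`,
where `−φ*_{f,z*}(x*) = inf_x [φ_{f,z*}(x) − x*(x)]` (in `EReal`, so the set in (ii) is `∅` if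
this value is `+∞` and `Z` if it is `−∞`). -/
theorem scalarization_conjugation_commute
    (C : Set Z) (hCconv : Convex ℝ C) (hCcone : ∀ t : ℝ, 0 < t → ∀ z ∈ C, t • z ∈ C)
    (hC0 : (0 : Z) ∈ C)
    (f : X → Set Z) (x' : X →L[ℝ] ℝ) (z' : Z →L[ℝ] ℝ)
    (hz' : z' ∈ posDual C) (hz0 : z' ≠ 0) :
    (⨅ x : X, (scal z' (f x) - (x' x : EReal))) = scal z' (negConj f x' z') ∧
    negConj f x' z'
      = {z : Z | (⨅ x : X, (scal z' (f x) - (x' x : EReal))) ≤ (z' z : EReal)} := by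
  -- find z0 with z' z0 = 1
  obtain ⟨z1, hz1⟩ : ∃ z1, z' z1 ≠ 0 := by
    by_contra h
    push_neg at h
    exact hz0 (by ext z; simp [h z])
  set z0 : Z := (z' z1)⁻¹ • z1 with hz0def
  have hz0one : z' z0 = 1 := by simp [hz0def, inv_mul_cancel₀ hz1]
  set α : EReal := ⨅ x : X, (scal z' (f x) - (x' x : EReal)) with hα
  have hii : negConj f x' z' = {z : Z | α ≤ (z' z : EReal)} := by
    apply Subset.antisymm
    · -- closure ⊆ closed halfspace
      apply closure_minimal
      · rintro u hu
        simp only [mem_iUnion] at hu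
        obtain ⟨x, hu⟩ := hu
        rw [Set.mem_add] at hu
        obtain ⟨w, hw, s, hs, rfl⟩ := hu
        have h1 : α ≤ scal z' (f x) - (x' x : EReal) := iInf_le _ x
        have h2 : scal z' (f x) ≤ (z' w : EReal) := iInf₂_le w hw
        have h3 : scal z' (f x) - (x' x : EReal) ≤ ((z' w - x' x : ℝ) : EReal) := by
          rw [EReal.coe_sub]
          exact EReal.sub_le_sub h2 le_rfl
        have h4 : (z' w - x' x : ℝ) ≤ z' (w + s) := by
          have := hs
          simp only [SMap, mem_setOf_eq, map_neg] at this
          simp only [map_add]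
          linarith
        exact le_trans (le_trans h1 h3) (EReal.coe_le_coe_iff.mpr h4)
      · have : {z : Z | α ≤ (z' z : EReal)} =
            (fun z => (z' z : EReal)) ⁻¹' Ici α := rfl
        rw [this]
        exact isClosed_Ici.preimage (continuous_coe_real_ereal.comp z'.continuous)
    · -- halfspace ⊆ closure
      rintro u hu
      simp only [mem_setOf_eq] at hu
      have htend : Tendsto (fun ε : ℝ => u + ε • z0) (𝓝[>] 0) (𝓝 u) := by
        have : Tendsto (fun ε : ℝ => u + ε • z0) (𝓝 0) (𝓝 (u + (0:ℝ) • z0)) := by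
          exact (tendsto_const_nhds.add ((continuous_id.smul continuous_const).tendsto 0))
        simpa using this.mono_left nhdsWithin_le_nhds
      refine mem_closure_of_tendsto htend ?_
      filter_upwards [self_mem_nhdsWithin] with ε hε
      have hεpos : (0:ℝ) < ε := hε
      -- α < z' u + ε
      have hlt : α < ((z' u + ε : ℝ) : EReal) := by
        refine lt_of_le_of_lt hu ?_
        exact_mod_cast lt_add_of_pos_right _ hεpos
      rw [hα, iInf_lt_iff] at hlt
      obtain ⟨x, hx⟩ := hlt
      have hsc : scal z' (f x) < ((z' u + ε + x' x : ℝ) : EReal) := by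
        have := EReal.add_lt_add_right_coe hx (x' x)
        rwa [EReal.sub_add_cancel, ← EReal.coe_add] at this
      rw [scal, iInf_lt_iff] at hsc
      obtain ⟨w, hb⟩ := hsc
      rw [iInf_lt_iff] at hb
      obtain ⟨hw, hwlt⟩ := hb
      have hwlt' : z' w < z' u + ε + x' x := EReal.coe_lt_coe_iff.mp hwlt
      simp only [mem_iUnion]
      refine ⟨x, ?_⟩
      rw [Set.mem_add]
      refine ⟨w, hw, u + ε • z0 - w, ?_, by abel⟩
      simp only [SMap, mem_setOf_eq, map_neg, map_sub, map_add, map_smul, hz0one,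
        smul_eq_mul, mul_one]
      linarith
  constructor
  · rw [hii]
    apply le_antisymm
    · exact le_iInf₂ fun z hz => hz
    · rw [← EReal.le_of_forall_lt_iff_le]
      intro r hr
      calc scal z' {z : Z | α ≤ (z' z : EReal)} ≤ (z' (r • z0) : EReal) := by
            apply iInf₂_le
            simp [mem_setOf_eq, hz0one, hr.le]
          _ = (r : EReal) := by simp [hz0one]
  · exact hii
end
end

section
/- (Lagrange functions of the scalarized problems.) For all x ∈ X, y* ∈ Y* and z* ∈ C+∖{0}: λ_{z*}(x,y*) = φ_{l,z*}(x,y*), i.e. φ_{f,z*}(x) + φ_{g,y*}(x) = inf{z*(z) : z ∈ l(x,y*,z*)}. -/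
open Set Pointwise Topology Filter

noncomputable section

variable {X Y Z : Type*}
  [AddCommGroup X] [Module ℝ X] [TopologicalSpace X] [IsTopologicalAddGroup X]
  [ContinuousSMul ℝ X] [LocallyConvexSpace ℝ X]
  [AddCommGroup Y] [Module ℝ Y] [TopologicalSpace Y] [IsTopologicalAddGroup Y]
  [ContinuousSMul ℝ Y] [LocallyConvexSpace ℝ Y]
  [AddCommGroup Z] [Module ℝ Z] [TopologicalSpace Z] [IsTopologicalAddGroup Z]
  [ContinuousSMul ℝ Z] [LocallyConvexSpace ℝ Z]

/- ### Auxiliary lemmas -/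

lemma scal_le_of_mem {z' : Z →L[ℝ] ℝ} {A : Set Z} {z : Z} (h : z ∈ A) :
    scal z' A ≤ (z' z : EReal) := iInf₂_le z h

lemma scal_anti {z' : Z →L[ℝ] ℝ} {A B : Set Z} (h : A ⊆ B) : scal z' B ≤ scal z' A :=
  le_iInf₂ fun z hz => scal_le_of_mem (h hz)

lemma scal_empty (z' : Z →L[ℝ] ℝ) : scal z' (∅ : Set Z) = ⊤ := by
  simp [scal]

lemma scal_ne_top {z' : Z →L[ℝ] ℝ} {A : Set Z} (h : A.Nonempty) : scal z' A ≠ ⊤ := by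
  obtain ⟨z, hz⟩ := h
  exact ((scal_le_of_mem hz).trans_lt (EReal.coe_lt_top _)).ne

lemma exists_lt_of_scal_lt {z' : Z →L[ℝ] ℝ} {A : Set Z} {q : EReal}
    (h : scal z' A < q) : ∃ z ∈ A, (z' z : EReal) < q := by
  rw [scal, iInf_lt_iff] at h
  obtain ⟨z, hz⟩ := h
  rw [iInf_lt_iff] at hz
  obtain ⟨hzA, hzq⟩ := hz
  exact ⟨z, hzA, hzq⟩

lemma scal_closure (z' : Z →L[ℝ] ℝ) (A : Set Z) : scal z' (closure A) = scal z' A := by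
  refine le_antisymm (scal_anti subset_closure) (le_iInf₂ fun z hz => ?_)
  rw [← EReal.le_of_forall_lt_iff_le]
  intro q hq
  have hmem : z' z ∈ closure (z' '' A) :=
    map_mem_closure z'.continuous hz (fun a ha => Set.mem_image_of_mem _ ha)
  have hlt : z' z < q := by exact_mod_cast hq
  obtain ⟨r, hrq, hr⟩ := _root_.mem_closure_iff.1 hmem (Set.Iio q) isOpen_Iio hlt
  obtain ⟨a, haA, rfl⟩ := hr
  exact (scal_le_of_mem haA).trans (by exact_mod_cast hrq.le)

lemma scal_add {z' : Z →L[ℝ] ℝ} {A B : Set Z} (hA : A.Nonempty) (hB : B.Nonempty) :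
    scal z' (A + B) = scal z' A + scal z' B := by
  refine le_antisymm ?_ (le_iInf₂ fun z hz => ?_)
  · rw [← EReal.le_of_forall_lt_iff_le]
    intro q hq
    suffices h : ∃ a ∈ A, ∃ b ∈ B, z' a + z' b < q by
      obtain ⟨a, ha, b, hb, hab⟩ := h
      refine (scal_le_of_mem (Set.add_mem_add ha hb)).trans ?_
      rw [map_add]
      exact_mod_cast hab.le
    by_cases hAbot : scal z' A = ⊥
    · obtain ⟨b, hb⟩ := hB
      have : scal z' A < ((q - z' b : ℝ) : EReal) := hAbot ▸ EReal.bot_lt_coe _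
      obtain ⟨a, ha, hlt⟩ := exists_lt_of_scal_lt this
      exact ⟨a, ha, b, hb, by linarith [EReal.coe_lt_coe_iff.1 hlt]⟩
    by_cases hBbot : scal z' B = ⊥
    · obtain ⟨a, ha⟩ := hA
      have : scal z' B < ((q - z' a : ℝ) : EReal) := hBbot ▸ EReal.bot_lt_coe _
      obtain ⟨b, hb, hlt⟩ := exists_lt_of_scal_lt this
      exact ⟨a, ha, b, hb, by linarith [EReal.coe_lt_coe_iff.1 hlt]⟩
    · have hAt := scal_ne_top (z' := z') hA
      have hBt := scal_ne_top (z' := z') hB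
      set sA := (scal z' A).toReal with hsA
      set sB := (scal z' B).toReal with hsB
      have hA' : scal z' A = (sA : EReal) := (EReal.coe_toReal hAt hAbot).symm
      have hB' : scal z' B = (sB : EReal) := (EReal.coe_toReal hBt hBbot).symm
      have hsum : sA + sB < q := by
        have := hq
        rw [hA', hB', ← EReal.coe_add, EReal.coe_lt_coe_iff] at this
        exact this
      set ε := (q - (sA + sB)) / 2 with hε
      have hεpos : 0 < ε := by rw [hε]; linarith
      have h1 : scal z' A < ((sA + ε : ℝ) : EReal) := by
        rw [hA', EReal.coe_lt_coe_iff]; linarith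
      have h2 : scal z' B < ((sB + ε : ℝ) : EReal) := by
        rw [hB', EReal.coe_lt_coe_iff]; linarith
      obtain ⟨a, ha, hlta⟩ := exists_lt_of_scal_lt h1
      obtain ⟨b, hb, hltb⟩ := exists_lt_of_scal_lt h2
      rw [EReal.coe_lt_coe_iff] at hlta hltb
      exact ⟨a, ha, b, hb, by linarith⟩
  · obtain ⟨a, ha, b, hb, rfl⟩ := Set.mem_add.1 hz
    rw [map_add, EReal.coe_add]
    exact add_le_add (scal_le_of_mem ha) (scal_le_of_mem hb)

lemma scal_SMap {z' : Z →L[ℝ] ℝ} {z₀ : Z} (hz₀ : z' z₀ = 1) (y' : Y →L[ℝ] ℝ) (y : Y) :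
    scal z' (SMap y' z' y) = (y' y : EReal) := by
  refine le_antisymm ?_ (le_iInf₂ fun z hz => by exact_mod_cast hz)
  have hmem : (y' y) • z₀ ∈ SMap y' z' y := by
    simp [SMap, hz₀]
  have := scal_le_of_mem (z' := z') hmem
  simpa [hz₀] using this

lemma scal_biUnion_SMap {z' : Z →L[ℝ] ℝ} {z₀ : Z} (hz₀ : z' z₀ = 1)
    (y' : Y →L[ℝ] ℝ) (s : Set Y) :
    scal z' (⋃ y ∈ s, SMap y' z' y) = scal y' s := by
  rw [scal, iInf_iUnion]
  calc (⨅ y, ⨅ z ∈ ⋃ (_ : y ∈ s), SMap y' z' y, (z' z : EReal))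
      = ⨅ y, ⨅ (_ : y ∈ s), ⨅ z ∈ SMap y' z' y, (z' z : EReal) := by
        refine iInf_congr fun y => ?_
        rw [iInf_iUnion]
    _ = ⨅ y ∈ s, (y' y : EReal) := by
        refine iInf_congr fun y => iInf_congr fun _ => scal_SMap hz₀ y' y
    _ = scal y' s := rfl

/-- **Lagrange functions of the scalarized problems.** For all `x ∈ X`, `y* ∈ Y*` and
`z* ∈ C⁺∖{0}`: `λ_{z*}(x,y*) = φ_{l,z*}(x,y*)`, i.e.
`φ_{f,z*}(x) + φ_{g,y*}(x) = inf {z*(z) | z ∈ l(x,y*,z*)}` (sum with the convention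
`(+∞) + (−∞) = (−∞) + (+∞) = +∞`). -/
theorem lagrangian_of_scalarized_problem
    (C : Set Z) (hCconv : Convex ℝ C) (hCcone : ∀ t : ℝ, 0 < t → ∀ z ∈ C, t • z ∈ C)
    (hC0 : (0 : Z) ∈ C)
    (D : Set Y) (hDconv : Convex ℝ D) (hDcone : ∀ t : ℝ, 0 < t → ∀ y ∈ D, t • y ∈ D)
    (hD0 : (0 : Y) ∈ D)
    (f : X → Set Z) (g : X → Set Y)
    (hfF : ∀ x, f x = closure (f x + C))
    (hgF : ∀ x, g x = closure (g x + D))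
    (x : X) (y' : Y →L[ℝ] ℝ) (z' : Z →L[ℝ] ℝ)
    (hz' : z' ∈ posDual C) (hz0 : z' ≠ 0) :
    eadd (scal z' (f x)) (scal y' (g x)) = scal z' (lag f g x y' z') := by
  -- extract a vector where `z'` equals one
  obtain ⟨w, hw⟩ : ∃ w, z' w ≠ 0 := by
    by_contra h
    push_neg at h
    exact hz0 (by ext w; simpa using h w)
  set z₀ : Z := (z' w)⁻¹ • w with hz₀def
  have hz₀ : z' z₀ = 1 := by
    simp [hz₀def, inv_mul_cancel₀ hw]
  by_cases hf : f x = ∅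
  · rw [lag, hf, Set.empty_add, closure_empty, scal_empty, eadd, if_pos (Or.inl rfl)]
  by_cases hg : g x = ∅
  · have hU : (⋃ y ∈ g x, SMap y' z' y) = ∅ := by simp [hg]
    rw [lag, hU, closure_empty, Set.add_empty, closure_empty, scal_empty,
      hg, scal_empty, eadd, if_pos (Or.inr rfl)]
  · have hfne : (f x).Nonempty := Set.nonempty_iff_ne_empty.2 hf
    have hgne : (g x).Nonempty := Set.nonempty_iff_ne_empty.2 hg
    have hU : (⋃ y ∈ g x, SMap y' z' y).Nonempty := by
      obtain ⟨y, hy⟩ := hgne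
      refine ⟨(y' y) • z₀, Set.mem_biUnion hy ?_⟩
      simp [SMap, hz₀]
    rw [lag, scal_closure, scal_add hfne hU.closure, scal_closure,
      scal_biUnion_SMap hz₀, eadd,
      if_neg (by push_neg; exact ⟨scal_ne_top hfne, scal_ne_top hgne⟩)]
end
end

section
/- (Scalarized problems.) Let f : X → P(Z) with f(x) = cl(f(x)+C) for all x, g : X → P(Y), and z* ∈ C+∖{0}. Then the following are equivalent: (a) cl(co(⋃{f(x) ⊕ S(z*) : x ∈ X, 0 ∈ g(x)})) ≠ Z; (b) −∞ < inf{φ_{f,z*}(x) : x ∈ X, 0 ∈ g(x)}. -/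
open Set Pointwise Topology Filter

noncomputable section

variable {X Y Z : Type*}
  [AddCommGroup X] [Module ℝ X] [TopologicalSpace X] [IsTopologicalAddGroup X]
  [ContinuousSMul ℝ X] [LocallyConvexSpace ℝ X]
  [AddCommGroup Y] [Module ℝ Y] [TopologicalSpace Y] [IsTopologicalAddGroup Y]
  [ContinuousSMul ℝ Y] [LocallyConvexSpace ℝ Y]
  [AddCommGroup Z] [Module ℝ Z] [TopologicalSpace Z] [IsTopologicalAddGroup Z]
  [ContinuousSMul ℝ Z] [LocallyConvexSpace ℝ Z]

/-- **Scalarized problems.** For `f` with `f(x) = cl(f(x)+C)` for all `x`, any `g`, and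
`z* ∈ C⁺∖{0}`, the following are equivalent:
(a) `cl co ⋃ {f(x) ⊕ S(z*) | 0 ∈ g(x)} ≠ Z`;
(b) `−∞ < inf {φ_{f,z*}(x) | 0 ∈ g(x)}`. -/
theorem scalarized_problems
    (C : Set Z) (hCconv : Convex ℝ C) (hCcone : ∀ t : ℝ, 0 < t → ∀ z ∈ C, t • z ∈ C)
    (hC0 : (0 : Z) ∈ C)
    (f : X → Set Z) (g : X → Set Y)
    (hfF : ∀ x, f x = closure (f x + C))
    (z' : Z →L[ℝ] ℝ) (hz' : z' ∈ posDual C) (hz0 : z' ≠ 0) :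
    closure (convexHull ℝ (⋃ x ∈ {x : X | (0 : Y) ∈ g x}, closure (f x + SPos z'))) ≠ univ
      ↔ ⊥ < ⨅ x ∈ {x : X | (0 : Y) ∈ g x}, scal z' (f x) := by
  constructor
  · intro hne
    by_contra hb
    apply hne
    have hI : (⨅ x ∈ {x : X | (0 : Y) ∈ g x}, scal z' (f x)) = ⊥ :=
      le_bot_iff.mp (not_lt.mp hb)
    have hA : (⋃ x ∈ {x : X | (0 : Y) ∈ g x}, closure (f x + SPos z')) = univ := by
      ext w
      simp only [mem_iUnion, mem_univ, iff_true]
      have hlt : (⨅ x ∈ {x : X | (0 : Y) ∈ g x}, scal z' (f x)) < ((z' w : ℝ) : EReal) := by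
        rw [hI]; exact EReal.bot_lt_coe _
      simp only [scal, iInf_lt_iff] at hlt
      obtain ⟨x, hx, z, hz, hzlt⟩ := hlt
      have hzr : z' z < z' w := EReal.coe_lt_coe_iff.mp hzlt
      refine ⟨x, hx, subset_closure ?_⟩
      have hs : w - z ∈ SPos z' := by
        simp only [SPos, mem_setOf_eq, map_sub]
        linarith
      have := add_mem_add hz hs
      rwa [show z + (w - z) = w by abel] at this
    rw [hA, convexHull_univ, closure_univ]
  · intro hb
    obtain ⟨m, hm⟩ : ∃ m : ℝ,
        ((m : ℝ) : EReal) ≤ ⨅ x ∈ {x : X | (0 : Y) ∈ g x}, scal z' (f x) := by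
      by_cases h : (⨅ x ∈ {x : X | (0 : Y) ∈ g x}, scal z' (f x)) = ⊤
      · exact ⟨0, h ▸ le_top⟩
      · exact ⟨_, (EReal.coe_toReal h hb.ne').le⟩
    set H : Set Z := {w : Z | m ≤ z' w} with hH
    have hHclosed : IsClosed H := isClosed_Ici.preimage z'.continuous
    have hHconv : Convex ℝ H := convex_halfSpace_ge ⟨z'.map_add, z'.map_smul⟩ m
    have hsub : closure (convexHull ℝ
        (⋃ x ∈ {x : X | (0 : Y) ∈ g x}, closure (f x + SPos z'))) ⊆ H := by
      apply closure_minimal _ hHclosed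
      apply convexHull_min _ hHconv
      apply iUnion₂_subset
      intro x hx
      apply closure_minimal _ hHclosed
      rintro w ⟨a, ha, s, hs, rfl⟩
      have h1 : ((m : ℝ) : EReal) ≤ ((z' a : ℝ) : EReal) := by
        refine le_trans hm (le_trans (biInf_le (fun x => scal z' (f x)) hx) ?_)
        exact iInf₂_le a ha
      have h2 : m ≤ z' a := EReal.coe_le_coe_iff.mp h1
      have h3 : (0 : ℝ) ≤ z' s := hs
      simp only [hH, mem_setOf_eq, map_add]
      linarith
    obtain ⟨z₀, hz₀⟩ : ∃ z₀, z' z₀ ≠ 0 := by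
      by_contra hc
      push_neg at hc
      exact hz0 (ContinuousLinearMap.ext fun z => by simp [hc z])
    intro heq
    have hw : ((m - 1) / z' z₀) • z₀ ∈ H := hsub (heq ▸ mem_univ _)
    simp only [hH, mem_setOf_eq, map_smul, smul_eq_mul] at hw
    rw [div_mul_cancel₀ _ hz₀] at hw
    linarith
end
end

section
/- (Weak duality.) For every x ∈ X with 0 ∈ g(x) and every (y*,z*) ∈ Y*×(C+∖{0}): (a) h(y*,z*) ⊇ f(x) ⊕ S(z*), and (b) φ_{h,z*}(y*) ≤ φ_{f,z*}(x), i.e. inf{z*(z) : z ∈ h(y*,z*)} ≤ inf{z*(z) : z ∈ f(x)}. -/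
open Set Pointwise Topology Filter

noncomputable section

variable {X Y Z : Type*}
  [AddCommGroup X] [Module ℝ X] [TopologicalSpace X] [IsTopologicalAddGroup X]
  [ContinuousSMul ℝ X] [LocallyConvexSpace ℝ X]
  [AddCommGroup Y] [Module ℝ Y] [TopologicalSpace Y] [IsTopologicalAddGroup Y]
  [ContinuousSMul ℝ Y] [LocallyConvexSpace ℝ Y]
  [AddCommGroup Z] [Module ℝ Z] [TopologicalSpace Z] [IsTopologicalAddGroup Z]
  [ContinuousSMul ℝ Z] [LocallyConvexSpace ℝ Z]

/-- **Weak duality.** For every `x` with `0 ∈ g(x)` and every `(y*,z*) ∈ Y* × (C⁺∖{0})`: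
(a) `h(y*,z*) ⊇ f(x) ⊕ S(z*)`, and (b) `φ_{h,z*}(y*) ≤ φ_{f,z*}(x)`. -/
theorem weak_duality
    (C : Set Z) (hCconv : Convex ℝ C) (hCcone : ∀ t : ℝ, 0 < t → ∀ z ∈ C, t • z ∈ C)
    (hC0 : (0 : Z) ∈ C)
    (D : Set Y) (hDconv : Convex ℝ D) (hDcone : ∀ t : ℝ, 0 < t → ∀ y ∈ D, t • y ∈ D)
    (hD0 : (0 : Y) ∈ D)
    (f : X → Set Z) (g : X → Set Y)
    (hfF : ∀ x, f x = closure (f x + C))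
    (hgF : ∀ x, g x = closure (g x + D))
    (x : X) (hx : (0 : Y) ∈ g x)
    (y' : Y →L[ℝ] ℝ) (z' : Z →L[ℝ] ℝ) (hz' : z' ∈ posDual C) (hz0 : z' ≠ 0) :
    closure (f x + SPos z') ⊆ dualObj f g y' z' ∧
    scal z' (dualObj f g y' z') ≤ scal z' (f x) := by
  have hSub : SPos z' ⊆ closure (⋃ y ∈ g x, SMap y' z' y) := by
    intro z hz
    apply subset_closure
    refine mem_iUnion₂.2 ⟨0, hx, ?_⟩
    simpa [SMap, SPos] using hz
  have hlag : closure (f x + SPos z') ⊆ lag f g x y' z' := by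
    apply closure_mono
    exact add_subset_add_left hSub
  have ha : closure (f x + SPos z') ⊆ dualObj f g y' z' := by
    refine hlag.trans ?_
    exact (subset_iUnion (fun x => lag f g x y' z') x).trans subset_closure
  refine ⟨ha, ?_⟩
  have hfsub : f x ⊆ dualObj f g y' z' := by
    intro z hz
    apply ha
    apply subset_closure
    exact ⟨z, hz, 0, by simp [SPos], by simp⟩
  refine le_iInf₂ fun z hz => ?_
  exact iInf₂_le z (hfsub hz)
end
end

section
/- (Scalarization and transition to value functions commute.) For every y ∈ Y and every z* ∈ C+∖{0}: φ_{v,z*}(y) = inf{φ_{f,z*}(x) : x ∈ X, y ∈ g(x)}, i.e. inf{z*(z) : z ∈ v(y)} = inf{φ_{f,z*}(x) : x ∈ X, y ∈ g(x)}. -/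
open Set Pointwise Topology Filter

noncomputable section

variable {X Y Z : Type*}
  [AddCommGroup X] [Module ℝ X] [TopologicalSpace X] [IsTopologicalAddGroup X]
  [ContinuousSMul ℝ X] [LocallyConvexSpace ℝ X]
  [AddCommGroup Y] [Module ℝ Y] [TopologicalSpace Y] [IsTopologicalAddGroup Y]
  [ContinuousSMul ℝ Y] [LocallyConvexSpace ℝ Y]
  [AddCommGroup Z] [Module ℝ Z] [TopologicalSpace Z] [IsTopologicalAddGroup Z]
  [ContinuousSMul ℝ Z] [LocallyConvexSpace ℝ Z]

lemma scal_closure_aux (z' : Z →L[ℝ] ℝ) (S : Set Z) : scal z' (closure S) = scal z' S := by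
  apply le_antisymm
  · exact le_iInf₂ fun z hz => iInf₂_le z (subset_closure hz)
  · refine le_iInf₂ fun z hz => ?_
    have hT : IsClosed {w : Z | scal z' S ≤ ((z' w : ℝ) : EReal)} :=
      isClosed_Ici.preimage (continuous_coe_real_ereal.comp z'.continuous)
    have hS : S ⊆ {w : Z | scal z' S ≤ ((z' w : ℝ) : EReal)} := fun w hw => show scal z' S ≤ _ from iInf₂_le w hw
    exact (closure_minimal hS hT) hz

/-- **Scalarization and transition to value functions commute.** For every `y ∈ Y` and
`z* ∈ C⁺∖{0}`: `φ_{v,z*}(y) = inf {φ_{f,z*}(x) | x ∈ X, y ∈ g(x)}`. -/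
theorem scalarization_value_function_commute
    (C : Set Z) (hCconv : Convex ℝ C) (hCcone : ∀ t : ℝ, 0 < t → ∀ z ∈ C, t • z ∈ C)
    (hC0 : (0 : Z) ∈ C)
    (D : Set Y) (hDconv : Convex ℝ D) (hDcone : ∀ t : ℝ, 0 < t → ∀ y ∈ D, t • y ∈ D)
    (hD0 : (0 : Y) ∈ D)
    (f : X → Set Z) (g : X → Set Y)
    (hfF : ∀ x, f x = closure (f x + C))
    (hgF : ∀ x, g x = closure (g x + D))
    (y : Y) (z' : Z →L[ℝ] ℝ) (hz' : z' ∈ posDual C) (hz0 : z' ≠ 0) :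
    scal z' (valFn f g y) = ⨅ x ∈ {x : X | y ∈ g x}, scal z' (f x) := by
  rw [valFn, scal_closure_aux]
  simp only [scal, iInf_iUnion]
end
end

section
/- (Conjugate of the value function.) For every (y*,z*) ∈ Y*×(C+∖{0}): −v*(y*,z*) = cl(⋃_{x ∈ X} l(x,−y*,z*)), where −v*(y*,z*) = cl(⋃_{y ∈ Y} [v(y) + S_{(y*,z*)}(−y)]). Moreover, for the scalarized value function v_{z*}(y) = inf{φ_{f,z*}(x) : x ∈ X, y ∈ g(x)}, one has −(v_{z*})*(y*) = inf_{x ∈ X} λ_{z*}(x,−y*), where −(v_{z*})*(y*) = inf_{y ∈ Y} [v_{z*}(y) − y*(y)]. -/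
open Set Pointwise Topology Filter

noncomputable section

variable {X Y Z : Type*}
  [AddCommGroup X] [Module ℝ X] [TopologicalSpace X] [IsTopologicalAddGroup X]
  [ContinuousSMul ℝ X] [LocallyConvexSpace ℝ X]
  [AddCommGroup Y] [Module ℝ Y] [TopologicalSpace Y] [IsTopologicalAddGroup Y]
  [ContinuousSMul ℝ Y] [LocallyConvexSpace ℝ Y]
  [AddCommGroup Z] [Module ℝ Z] [TopologicalSpace Z] [IsTopologicalAddGroup Z]
  [ContinuousSMul ℝ Z] [LocallyConvexSpace ℝ Z]

section Helpers

lemma ereal_iInf_add {ι : Sort*} (F : ι → EReal) (r : ℝ) :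
    (⨅ i, F i) + (r : EReal) = ⨅ i, (F i + (r : EReal)) := by
  apply le_antisymm
  · exact le_iInf fun i => add_le_add_left (iInf_le _ i) _
  · rw [← EReal.sub_le_iff_le_add (.inl (by simp)) (.inl (by simp))]
    refine le_iInf fun i => ?_
    calc (⨅ i, (F i + (r:EReal))) - (r:EReal) ≤ (F i + r) - r :=
          add_le_add_left (iInf_le _ i) _
      _ = F i := EReal.add_sub_cancel_right

lemma ereal_add_iInf {ι : Sort*} (F : ι → EReal) (r : ℝ) :
    (r : EReal) + (⨅ i, F i) = ⨅ i, ((r : EReal) + F i) := by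
  rw [add_comm, ereal_iInf_add]; simp [add_comm]

lemma ereal_iInf_sub {ι : Sort*} (F : ι → EReal) (r : ℝ) :
    (⨅ i, F i) - (r : EReal) = ⨅ i, (F i - (r : EReal)) := by
  have := ereal_iInf_add F (-r)
  simpa [sub_eq_add_neg, EReal.coe_neg] using this

variable {W : Type*} [AddCommGroup W] [TopologicalSpace W] [IsTopologicalAddGroup W]

lemma closure_add_subset' (A B : Set W) : closure A + B ⊆ closure (A + B) := by
  rintro _ ⟨a, ha, b, hb, rfl⟩
  have h := image_closure_subset_closure_image (f := fun z : W => z + b) (s := A)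
    (continuous_id.add continuous_const)
  have h2 : a + b ∈ closure ((fun z : W => z + b) '' A) := h ⟨a, ha, rfl⟩
  exact closure_mono (by rintro _ ⟨a', ha', rfl⟩; exact add_mem_add ha' hb) h2

lemma closure_closure_add (A B : Set W) :
    closure (closure A + B) = closure (A + B) :=
  le_antisymm (closure_minimal (closure_add_subset' A B) isClosed_closure)
    (closure_mono (add_subset_add_right subset_closure))

lemma closure_add_closure' (A B : Set W) :
    closure (A + closure B) = closure (A + B) := by
  rw [add_comm A, add_comm A, closure_closure_add]

lemma closure_iUnion_closure {ι : Sort*} (s : ι → Set W) :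
    closure (⋃ i, closure (s i)) = closure (⋃ i, s i) :=
  le_antisymm (closure_minimal (iUnion_subset fun i =>
      closure_mono (subset_iUnion _ i)) isClosed_closure)
    (closure_mono (iUnion_mono fun _ => subset_closure))

lemma closure_iUnion_congr {ι : Sort*} {s t : ι → Set W}
    (h : ∀ i, closure (s i) = closure (t i)) :
    closure (⋃ i, s i) = closure (⋃ i, t i) := by
  rw [← closure_iUnion_closure s, ← closure_iUnion_closure t]
  simp_rw [h]

end Helpers

/-- **Conjugate of the value function.** For every `(y*,z*) ∈ Y* × (C⁺∖{0})`:
`−v*(y*,z*) = cl ⋃_{y} [v(y) + S_{(y*,z*)}(−y)] = cl ⋃_x l(x,−y*,z*)`; and for the scalarized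
value function `v_{z*}(y) = inf {φ_{f,z*}(x) | y ∈ g(x)}` one has
`−(v_{z*})*(y*) = inf_y [v_{z*}(y) − y*(y)] = inf_x λ_{z*}(x,−y*)`. -/
theorem conjugate_of_value_function
    (C : Set Z) (hCconv : Convex ℝ C) (hCcone : ∀ t : ℝ, 0 < t → ∀ z ∈ C, t • z ∈ C)
    (hC0 : (0 : Z) ∈ C)
    (D : Set Y) (hDconv : Convex ℝ D) (hDcone : ∀ t : ℝ, 0 < t → ∀ y ∈ D, t • y ∈ D)
    (hD0 : (0 : Y) ∈ D)
    (f : X → Set Z) (g : X → Set Y)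
    (hfF : ∀ x, f x = closure (f x + C))
    (hgF : ∀ x, g x = closure (g x + D))
    (y' : Y →L[ℝ] ℝ) (z' : Z →L[ℝ] ℝ) (hz' : z' ∈ posDual C) (hz0 : z' ≠ 0) :
    closure (⋃ y : Y, (valFn f g y + SMap y' z' (-y)))
        = closure (⋃ x : X, lag f g x (-y') z') ∧
    (⨅ y : Y, ((⨅ x ∈ {x : X | y ∈ g x}, scal z' (f x)) - (y' y : EReal)))
        = ⨅ x : X, eadd (scal z' (f x)) (scal (-y') (g x)) := by
  constructor
  · -- set-valued part
    have hS : ∀ y : Y, SMap y' z' (-y) = SMap (-y') z' y := by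
      intro y; ext z; simp [SMap]
    have L1 : closure (⋃ y : Y, (valFn f g y + SMap y' z' (-y)))
        = closure (⋃ y : Y, ⋃ x : X, ⋃ _ : y ∈ g x, (f x + SMap (-y') z' y)) := by
      apply closure_iUnion_congr; intro y
      rw [hS, valFn, closure_closure_add]
      congr 1
      simp only [mem_setOf_eq, Set.iUnion_add]
    have R1 : closure (⋃ x : X, lag f g x (-y') z')
        = closure (⋃ x : X, ⋃ y : Y, ⋃ _ : y ∈ g x, (f x + SMap (-y') z' y)) := by
      apply closure_iUnion_congr; intro x
      rw [lag, closure_closure, closure_add_closure']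
      congr 1
      simp only [Set.add_iUnion]
    rw [L1, R1, iUnion_comm]
  · -- scalar part
    have key : ∀ x : X, eadd (scal z' (f x)) (scal (-y') (g x))
        = ⨅ y : Y, ⨅ _ : y ∈ g x, (scal z' (f x) - (y' y : EReal)) := by
      intro x
      rcases (g x).eq_empty_or_nonempty with hgx | ⟨y₀, hy₀⟩
      · simp [eadd, scal, hgx]
      · set a := scal z' (f x) with ha_def
        have hble : scal (-y') (g x) ≤ (((-y') y₀ : ℝ) : EReal) := by
          rw [scal]; exact iInf₂_le y₀ hy₀
        have hbne : scal (-y') (g x) ≠ ⊤ :=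
          (lt_of_le_of_lt hble (EReal.coe_lt_top _)).ne
        by_cases ha : a = ⊤
        · simp [eadd, ha, EReal.top_sub_coe]
        by_cases hb : a = ⊥
        · have : eadd a (scal (-y') (g x)) = ⊥ := by
            simp [eadd, ha, hbne, hb, EReal.bot_add]
          rw [this]
          refine le_antisymm bot_le ?_
          refine iInf_le_of_le y₀ (iInf_le_of_le hy₀ ?_)
          simp [hb, EReal.bot_sub]
        · have heq : eadd a (scal (-y') (g x)) = a + scal (-y') (g x) := by
            simp [eadd, ha, hbne]
          rw [heq, ← EReal.coe_toReal ha hb, scal]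
          rw [ereal_add_iInf]
          refine iInf_congr fun y => ?_
          rw [ereal_add_iInf]
          refine iInf_congr fun hy => ?_
          rw [ContinuousLinearMap.neg_apply, EReal.coe_neg, ← sub_eq_add_neg]
    simp_rw [key]
    rw [iInf_comm]
    refine iInf_congr fun y => ?_
    rw [ereal_iInf_sub]
    refine iInf_congr fun x => ?_
    rw [ereal_iInf_sub]
    simp only [mem_setOf_eq]
end
end

section
/- (Strong duality.) Let f and g be convex (i.e. their graphs are convex) and assume the Slater condition: there exists x̄ ∈ X with f(x̄) ≠ ∅ and g(x̄) ∩ (−int D) ≠ ∅. Then strong duality holds: p = d, and for every z* ∈ C+∖{0}: p_{z*} = d_{z*}. -/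
open Set Pointwise Topology Filter

noncomputable section

variable {X Y Z : Type*}
  [AddCommGroup X] [Module ℝ X] [TopologicalSpace X] [IsTopologicalAddGroup X]
  [ContinuousSMul ℝ X] [LocallyConvexSpace ℝ X]
  [AddCommGroup Y] [Module ℝ Y] [TopologicalSpace Y] [IsTopologicalAddGroup Y]
  [ContinuousSMul ℝ Y] [LocallyConvexSpace ℝ Y]
  [AddCommGroup Z] [Module ℝ Z] [TopologicalSpace Z] [IsTopologicalAddGroup Z]
  [ContinuousSMul ℝ Z] [LocallyConvexSpace ℝ Z]

theorem sep_core
    (D : Set Y) (hDconv : Convex ℝ D) (hDcone : ∀ t : ℝ, 0 < t → ∀ y ∈ D, t • y ∈ D)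
    (f : X → Set Z) (g : X → Set Y)
    (hgF : ∀ x, g x = closure (g x + D))
    (hfconv : Convex ℝ {q : X × Z | q.2 ∈ f q.1})
    (hgconv : Convex ℝ {q : X × Y | q.2 ∈ g q.1})
    (slater : ∃ x : X, (f x).Nonempty ∧ (g x ∩ (-(interior D))).Nonempty)
    (z' : Z →L[ℝ] ℝ) (ρ : ℝ)
    (hρ : ∀ x, (0 : Y) ∈ g x → ∀ z ∈ f x, ρ ≤ z' z) :
    ∃ y' : Y →L[ℝ] ℝ, ∀ x, ∀ z ∈ f x, ∀ w ∈ g x, ρ ≤ z' z + y' w := by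
  obtain ⟨xb, ⟨zb, hzb⟩, ⟨wb, hwb, hwb'⟩⟩ := slater
  have hd0 : -wb ∈ interior D := Set.mem_neg.mp hwb'
  -- feasibility from a point of g x in -D
  have hfeas : ∀ (x : X) (w : Y), w ∈ g x → -w ∈ D → (0 : Y) ∈ g x := by
    intro x w hw hw'
    have h0 : (0 : Y) ∈ g x + D := by
      have := Set.add_mem_add hw hw'
      rwa [add_neg_cancel] at this
    rw [hgF x]
    exact subset_closure h0
  -- the open convex set to separate from (0, ρ)
  set A : Set (Y × ℝ) :=
    {q : Y × ℝ | ∃ x, ∃ z ∈ f x, ∃ w ∈ g x, q.1 - w ∈ interior D ∧ z' z < q.2} with hA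
  have hAopen : IsOpen A := by
    rw [isOpen_iff_forall_mem_open]
    rintro q ⟨x, z, hz, w, hw, hd, hr⟩
    refine ⟨(fun q : Y × ℝ => q.1 - w) ⁻¹' interior D ∩ Prod.snd ⁻¹' Ioi (z' z), ?_, ?_, hd, hr⟩
    · rintro p ⟨hp1, hp2⟩
      exact ⟨x, z, hz, w, hw, hp1, hp2⟩
    · exact ((isOpen_interior.preimage (continuous_fst.sub continuous_const)).inter
        (isOpen_Ioi.preimage continuous_snd))
  have hAconv : Convex ℝ A := by
    rintro ⟨y1, r1⟩ ⟨x1, z1, hz1, w1, hw1, hd1, hr1⟩ ⟨y2, r2⟩ ⟨x2, z2, hz2, w2, hw2, hd2, hr2⟩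
      a b ha hb hab
    refine ⟨a • x1 + b • x2, a • z1 + b • z2, ?_, a • w1 + b • w2, ?_, ?_, ?_⟩
    · exact hfconv (show ((x1, z1) : X × Z) ∈ _ from hz1)
        (show ((x2, z2) : X × Z) ∈ _ from hz2) ha hb hab
    · exact hgconv (show ((x1, w1) : X × Y) ∈ _ from hw1)
        (show ((x2, w2) : X × Y) ∈ _ from hw2) ha hb hab
    · show (a • (y1, r1) + b • (y2, r2) : Y × ℝ).1 - (a • w1 + b • w2) ∈ interior D
      have h := hDconv.interior hd1 hd2 ha hb hab
      have he : (a • (y1, r1) + b • (y2, r2) : Y × ℝ).1 - (a • w1 + b • w2)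
          = a • (y1 - w1) + b • (y2 - w2) := by
        show a • y1 + b • y2 - (a • w1 + b • w2) = a • (y1 - w1) + b • (y2 - w2)
        module
      rw [he]; exact h
    · show z' (a • z1 + b • z2) < (a • (y1, r1) + b • (y2, r2) : Y × ℝ).2
      have he : (a • (y1, r1) + b • (y2, r2) : Y × ℝ).2 = a * r1 + b * r2 := rfl
      rw [he, map_add, map_smul, map_smul, smul_eq_mul, smul_eq_mul]
      rcases lt_or_eq_of_le ha with ha' | ha'
      · have h1 : a * z' z1 < a * r1 := mul_lt_mul_of_pos_left hr1 ha'
        have h2 : b * z' z2 ≤ b * r2 := mul_le_mul_of_nonneg_left hr2.le hb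
        linarith
      · have hb' : (0 : ℝ) < b := by linarith
        have h2 : b * z' z2 < b * r2 := mul_lt_mul_of_pos_left hr2 hb'
        nlinarith
  have hA0 : ((0 : Y), ρ) ∉ A := by
    rintro ⟨x, z, hz, w, hw, hd, hr⟩
    have hd' : -w ∈ interior D := by
      have : ((0 : Y), ρ).1 - w = -w := by simp
      rwa [this] at hd
    have h0 : (0 : Y) ∈ g x := hfeas x w hw (interior_subset hd')
    exact absurd (hρ x h0 z hz) (by simpa using hr.not_ge)
  obtain ⟨L, hL⟩ := geometric_hahn_banach_open_point hAconv hAopen hA0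
  set c : ℝ := L ((0 : Y), (1 : ℝ)) with hc_def
  have hdecomp : ∀ (y : Y) (r : ℝ), L (y, r) = L (y, 0) + r * c := by
    intro y r
    have he : ((y, r) : Y × ℝ) = (y, (0 : ℝ)) + r • ((0 : Y), (1 : ℝ)) := by
      simp [Prod.ext_iff]
    rw [he, map_add, map_smul, smul_eq_mul]
  have hzero : L ((0 : Y), (0 : ℝ)) = 0 := by
    have : ((0 : Y), (0 : ℝ)) = (0 : Y × ℝ) := rfl
    rw [this, map_zero]
  have hmemA : ∀ s : ℝ, z' zb < s → ((0 : Y), s) ∈ A := by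
    intro s hs
    refine ⟨xb, zb, hzb, wb, hwb, ?_, hs⟩
    show ((0 : Y), s).1 - wb ∈ interior D
    simpa using hd0
  -- c < 0
  have hc : c < 0 := by
    set s0 : ℝ := max (z' zb) ρ + 1 with hs0
    have h1 : ((0 : Y), s0) ∈ A := hmemA s0 (by have := le_max_left (z' zb) ρ; simp [hs0]; linarith)
    have h2 := hL _ h1
    rw [hdecomp 0 s0, hdecomp 0 ρ, hzero] at h2
    have hρs : ρ < s0 := by have := le_max_right (z' zb) ρ; simp [hs0]; linarith
    by_contra hge
    push_neg at hge
    nlinarith [mul_le_mul_of_nonneg_right hρs.le hge]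
  refine ⟨(1 / c) • L.comp (ContinuousLinearMap.inl ℝ Y ℝ), ?_⟩
  intro x z hz w hw
  -- the small-interior-element trick
  have hsmall : ∀ t : ℝ, 0 < t → t • (-wb) ∈ interior D := by
    intro t ht
    have h1 : t • interior D ⊆ interior D := by
      rw [← interior_smul₀ (ne_of_gt ht) D]
      refine interior_mono ?_
      rintro _ ⟨y, hy, rfl⟩
      exact hDcone t ht y hy
    exact h1 (smul_mem_smul_set hd0)
  have hineq : ∀ t : ℝ, 0 < t →
      L (w + t • (-wb), 0) + (z' z + t) * c < ρ * c := by
    intro t ht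
    have hq : ((w + t • (-wb), z' z + t) : Y × ℝ) ∈ A := by
      refine ⟨x, z, hz, w, hw, ?_, by simp; linarith⟩
      show (w + t • (-wb)) - w ∈ interior D
      rw [add_sub_cancel_left]
      exact hsmall t ht
    have h5 := hL _ hq
    rw [hdecomp (w + t • (-wb)) (z' z + t), hdecomp 0 ρ, hzero] at h5
    linarith
  have hlin : ∀ t : ℝ, L (w + t • (-wb), 0) = L (w, 0) + t * L (-wb, 0) := by
    intro t
    have he : ((w + t • (-wb), (0 : ℝ)) : Y × ℝ) = (w, 0) + t • (-wb, (0 : ℝ)) := by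
      simp [Prod.ext_iff]
    rw [he, map_add, map_smul, smul_eq_mul]
  set lw : ℝ := L (w, 0) with hlw
  set u : ℝ := L (-wb, 0) with hu
  have hkey : lw + z' z * c ≤ ρ * c := by
    have hcont : Tendsto (fun t : ℝ => lw + t * u + (z' z + t) * c) (𝓝[>] (0 : ℝ))
        (𝓝 (lw + 0 * u + (z' z + 0) * c)) := by
      apply Tendsto.mono_left _ nhdsWithin_le_nhds
      exact Continuous.tendsto ((continuous_const.add (continuous_id.mul continuous_const)).add
        ((continuous_const.add continuous_id).mul continuous_const)) 0
    have hev : ∀ᶠ t in 𝓝[>] (0 : ℝ), lw + t * u + (z' z + t) * c ≤ ρ * c := by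
      refine Filter.eventually_of_mem self_mem_nhdsWithin (fun t ht => ?_)
      have := hineq t ht
      rw [hlin t] at this
      linarith
    have := le_of_tendsto hcont hev
    simpa using this
  -- conclude
  have hc0 : c ≠ 0 := ne_of_lt hc
  show ρ ≤ z' z + ((1 / c) • L.comp (ContinuousLinearMap.inl ℝ Y ℝ)) w
  have happ : ((1 / c) • L.comp (ContinuousLinearMap.inl ℝ Y ℝ)) w = (1 / c) * lw := by
    simp [ContinuousLinearMap.smul_apply, ContinuousLinearMap.comp_apply, hlw, smul_eq_mul]
  rw [happ]
  rw [← sub_nonneg]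
  have h3 : z' z + 1 / c * lw - ρ = (lw + z' z * c - ρ * c) * (1 / c) := by
    field_simp
    ring
  rw [h3]
  have h4 : lw + z' z * c - ρ * c ≤ 0 := by linarith
  have h5 : 1 / c ≤ 0 := one_div_nonpos.mpr hc.le
  nlinarith

/-- **Strong duality.** Let `f` and `g` be convex (convex graphs) and assume the Slater
condition: there is `x̄` with `f(x̄) ≠ ∅` and `g(x̄) ∩ (−int D) ≠ ∅`. Then `p = d` and, for
every `z* ∈ C⁺∖{0}`, `p_{z*} = d_{z*}`. -/
theorem strong_duality
    (C : Set Z) (hCconv : Convex ℝ C) (hCcone : ∀ t : ℝ, 0 < t → ∀ z ∈ C, t • z ∈ C)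
    (hC0 : (0 : Z) ∈ C)
    (D : Set Y) (hDconv : Convex ℝ D) (hDcone : ∀ t : ℝ, 0 < t → ∀ y ∈ D, t • y ∈ D)
    (hD0 : (0 : Y) ∈ D)
    (f : X → Set Z) (g : X → Set Y)
    (hfF : ∀ x, f x = closure (f x + C))
    (hgF : ∀ x, g x = closure (g x + D))
    (hfconv : Convex ℝ {q : X × Z | q.2 ∈ f q.1})
    (hgconv : Convex ℝ {q : X × Y | q.2 ∈ g q.1})
    (slater : ∃ x : X, (f x).Nonempty ∧ (g x ∩ (-(interior D))).Nonempty) :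
    valFn f g 0 = (⋂ (y' : Y →L[ℝ] ℝ), ⋂ z' ∈ posDual C \ {0}, dualObj f g y' z') ∧
    ∀ z' ∈ posDual C \ {0},
      (⨅ x ∈ {x : X | (0 : Y) ∈ g x}, scal z' (f x))
        = ⨆ y' : Y →L[ℝ] ℝ, ⨅ x : X, eadd (scal z' (f x)) (scal y' (g x)) := by
  obtain ⟨xb, ⟨zb, hzb⟩, ⟨wb, hwb, hwb'⟩⟩ := slater
  have hslater : ∃ x : X, (f x).Nonempty ∧ (g x ∩ (-(interior D))).Nonempty :=
    ⟨xb, ⟨zb, hzb⟩, ⟨wb, hwb, hwb'⟩⟩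
  have hd0 : -wb ∈ interior D := Set.mem_neg.mp hwb'
  have hfeas0 : (0 : Y) ∈ g xb := by
    have h0 : (0 : Y) ∈ g xb + D := by
      have := Set.add_mem_add hwb (interior_subset hd0)
      rwa [add_neg_cancel] at this
    rw [hgF xb]; exact subset_closure h0
  -- ============ Part 2 (scalar strong duality), for every z' ============
  have part2 : ∀ z' : Z →L[ℝ] ℝ,
      (⨅ x ∈ {x : X | (0 : Y) ∈ g x}, scal z' (f x))
        = ⨆ y' : Y →L[ℝ] ℝ, ⨅ x : X, eadd (scal z' (f x)) (scal y' (g x)) := by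
    intro z'
    -- weak duality
    have hweak : ∀ y' : Y →L[ℝ] ℝ,
        (⨅ x : X, eadd (scal z' (f x)) (scal y' (g x)))
          ≤ ⨅ x ∈ {x : X | (0 : Y) ∈ g x}, scal z' (f x) := by
      intro y'
      refine le_iInf₂ fun x hx => ?_
      refine le_trans (iInf_le _ x) ?_
      have hb0 : scal y' (g x) ≤ 0 := by
        have h1 : scal y' (g x) ≤ ((y' 0 : ℝ) : EReal) := iInf₂_le (0 : Y) hx
        simpa using h1
      have hbtop : scal y' (g x) ≠ ⊤ :=
        fun h => by rw [h] at hb0; exact absurd hb0 (by simp)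
      unfold eadd
      split_ifs with h
      · rcases h with h | h
        · rw [h]
        · exact absurd h hbtop
      · calc scal z' (f x) + scal y' (g x) ≤ scal z' (f x) + 0 := add_le_add le_rfl hb0
          _ = scal z' (f x) := add_zero _
    refine le_antisymm ?_ (iSup_le hweak)
    -- strong direction
    by_cases hbot : (⨅ x ∈ {x : X | (0 : Y) ∈ g x}, scal z' (f x)) = ⊥
    · rw [hbot]; exact bot_le
    have htop : (⨅ x ∈ {x : X | (0 : Y) ∈ g x}, scal z' (f x)) ≠ ⊤ := by
      have h1 : (⨅ x ∈ {x : X | (0 : Y) ∈ g x}, scal z' (f x)) ≤ (z' zb : EReal) :=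
        le_trans (iInf₂_le xb hfeas0) (iInf₂_le zb hzb)
      exact ne_top_of_le_ne_top (EReal.coe_ne_top _) h1
    set ρ : ℝ := (⨅ x ∈ {x : X | (0 : Y) ∈ g x}, scal z' (f x)).toReal with hρdef
    have hPρ : (ρ : EReal) = ⨅ x ∈ {x : X | (0 : Y) ∈ g x}, scal z' (f x) :=
      EReal.coe_toReal htop hbot
    have hρ : ∀ x, (0 : Y) ∈ g x → ∀ z ∈ f x, ρ ≤ z' z := by
      intro x hx z hz
      have h1 : (⨅ x ∈ {x : X | (0 : Y) ∈ g x}, scal z' (f x)) ≤ (z' z : EReal) :=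
        le_trans (iInf₂_le x hx) (iInf₂_le z hz)
      rw [← hPρ] at h1
      exact EReal.coe_le_coe_iff.mp h1
    obtain ⟨y', hy'⟩ := sep_core D hDconv hDcone f g hgF hfconv hgconv hslater z' ρ hρ
    refine le_trans ?_ (le_iSup _ y')
    rw [← hPρ]
    refine le_iInf fun x => ?_
    rcases Set.eq_empty_or_nonempty (f x) with hfe | ⟨z₀, hz₀⟩
    · have ha : scal z' (f x) = ⊤ := by simp [scal, hfe]
      simp [eadd, ha]
    rcases Set.eq_empty_or_nonempty (g x) with hge | ⟨w₀, hw₀⟩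
    · have hb : scal y' (g x) = ⊤ := by simp [scal, hge]
      simp [eadd, hb]
    have ha_top : scal z' (f x) ≠ ⊤ :=
      ne_top_of_le_ne_top (EReal.coe_ne_top (z' z₀)) (iInf₂_le z₀ hz₀)
    have hb_top : scal y' (g x) ≠ ⊤ :=
      ne_top_of_le_ne_top (EReal.coe_ne_top (y' w₀)) (iInf₂_le w₀ hw₀)
    have ha_lb : ((ρ - y' w₀ : ℝ) : EReal) ≤ scal z' (f x) :=
      le_iInf₂ fun z hz => EReal.coe_le_coe_iff.mpr (by linarith [hy' x z hz w₀ hw₀])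
    have hb_lb : ((ρ - z' z₀ : ℝ) : EReal) ≤ scal y' (g x) :=
      le_iInf₂ fun w hw => EReal.coe_le_coe_iff.mpr (by linarith [hy' x z₀ hz₀ w hw])
    have ha_bot : scal z' (f x) ≠ ⊥ :=
      (lt_of_lt_of_le (EReal.bot_lt_coe _) ha_lb).ne'
    have hb_bot : scal y' (g x) ≠ ⊥ :=
      (lt_of_lt_of_le (EReal.bot_lt_coe _) hb_lb).ne'
    set a₀ : ℝ := (scal z' (f x)).toReal with ha₀def
    set b₀ : ℝ := (scal y' (g x)).toReal with hb₀def
    have ha0 : (a₀ : EReal) = scal z' (f x) := EReal.coe_toReal ha_top ha_bot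
    have hb0 : (b₀ : EReal) = scal y' (g x) := EReal.coe_toReal hb_top hb_bot
    have heq : eadd (scal z' (f x)) (scal y' (g x)) = ((a₀ + b₀ : ℝ) : EReal) := by
      unfold eadd
      rw [if_neg (by push_neg; exact ⟨ha_top, hb_top⟩), ← ha0, ← hb0, ← EReal.coe_add]
    rw [heq, EReal.coe_le_coe_iff]
    by_contra hlt
    push_neg at hlt
    set ε : ℝ := (ρ - (a₀ + b₀)) / 2 with hεdef
    have hε : 0 < ε := by rw [hεdef]; linarith
    obtain ⟨z, hz, hzlt⟩ : ∃ z ∈ f x, z' z < a₀ + ε := by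
      have h1 : scal z' (f x) < ((a₀ + ε : ℝ) : EReal) := by
        rw [← ha0]; exact_mod_cast (by linarith : a₀ < a₀ + ε)
      simp only [scal, iInf_lt_iff] at h1
      obtain ⟨z, hz, h2⟩ := h1
      exact ⟨z, hz, EReal.coe_lt_coe_iff.mp h2⟩
    obtain ⟨w, hw, hwlt⟩ : ∃ w ∈ g x, y' w < b₀ + ε := by
      have h1 : scal y' (g x) < ((b₀ + ε : ℝ) : EReal) := by
        rw [← hb0]; exact_mod_cast (by linarith : b₀ < b₀ + ε)
      simp only [scal, iInf_lt_iff] at h1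
      obtain ⟨w, hw, h2⟩ := h1
      exact ⟨w, hw, EReal.coe_lt_coe_iff.mp h2⟩
    have := hy' x z hz w hw
    rw [hεdef] at hzlt hwlt
    linarith
  refine ⟨?_, fun z' _ => part2 z'⟩
  -- ============ Part 1 (set-valued strong duality) ============
  refine Set.Subset.antisymm ?_ ?_
  · -- valFn ⊆ ⋂ dualObj (weak duality)
    refine Set.subset_iInter fun y' => Set.subset_iInter₂ fun z'' _ => ?_
    unfold valFn dualObj
    refine closure_minimal (Set.iUnion₂_subset fun x hx => ?_) isClosed_closure
    intro z hz
    refine subset_closure (Set.mem_iUnion.mpr ⟨x, ?_⟩)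
    unfold lag
    apply subset_closure
    rw [Set.mem_add]
    refine ⟨z, hz, 0, ?_, add_zero z⟩
    exact subset_closure (Set.mem_iUnion₂.mpr ⟨0, hx, by simp [SMap]⟩)
  · -- ⋂ dualObj ⊆ valFn (strong duality)
    intro z₀ hz₀
    by_contra hz₀P
    have hP0conv : Convex ℝ (⋃ x ∈ {x : X | (0 : Y) ∈ g x}, f x) := by
      rintro p hp q hq a b ha hb hab
      rw [Set.mem_iUnion₂] at hp hq ⊢
      obtain ⟨x1, hx1, hp⟩ := hp
      obtain ⟨x2, hx2, hq⟩ := hq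
      refine ⟨a • x1 + b • x2, ?_, ?_⟩
      · have h := hgconv (show ((x1, (0 : Y)) : X × Y) ∈ _ from hx1)
          (show ((x2, (0 : Y)) : X × Y) ∈ _ from hx2) ha hb hab
        simpa using h
      · exact hfconv (show ((x1, p) : X × Z) ∈ _ from hp)
          (show ((x2, q) : X × Z) ∈ _ from hq) ha hb hab
    obtain ⟨z', u, hsep, hu⟩ :=
      geometric_hahn_banach_point_closed (hP0conv.closure) isClosed_closure hz₀P
    have hzb_mem : zb ∈ valFn f g 0 :=
      subset_closure (Set.mem_iUnion₂.mpr ⟨xb, hfeas0, hzb⟩)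
    have hCpos : z' ∈ posDual C := by
      intro cz hcz
      by_contra hneg
      push_neg at hneg
      set t : ℝ := (z' zb - u + 1) / (-(z' cz)) with htdef
      have ht : 0 < t := div_pos (by linarith [hu zb hzb_mem]) (by linarith)
      have hmem : zb + t • cz ∈ valFn f g 0 := by
        have h1 : zb + t • cz ∈ f xb := by
          rw [hfF xb]
          exact subset_closure (Set.add_mem_add hzb (hCcone t ht cz hcz))
        exact subset_closure (Set.mem_iUnion₂.mpr ⟨xb, hfeas0, h1⟩)
      have h2 := hu _ hmem
      rw [map_add, map_smul, smul_eq_mul] at h2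
      have hne : z' cz ≠ 0 := ne_of_lt hneg
      have ht2 : t * z' cz = -(z' zb - u + 1) := by
        rw [htdef]; field_simp
      linarith
    have hz'ne : z' ≠ 0 := by
      intro h
      have h1 := hu zb hzb_mem
      rw [h] at hsep h1
      simp at hsep h1
      linarith
    have hρ2 : ∀ x, (0 : Y) ∈ g x → ∀ z ∈ f x, u ≤ z' z := fun x hx z hz =>
      (hu z (subset_closure (Set.mem_iUnion₂.mpr ⟨x, hx, hz⟩))).le
    obtain ⟨y', hy'⟩ := sep_core D hDconv hDcone f g hgF hfconv hgconv hslater z' u hρ2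
    have hz₀d : z₀ ∈ dualObj f g y' z' := by
      have h1 := Set.mem_iInter.mp hz₀ y'
      exact Set.mem_iInter₂.mp h1 z' ⟨hCpos, by simpa using hz'ne⟩
    have hK : dualObj f g y' z' ⊆ {v : Z | u ≤ z' v} := by
      have hKc : IsClosed {v : Z | u ≤ z' v} := isClosed_le continuous_const z'.continuous
      unfold dualObj
      refine closure_minimal (Set.iUnion_subset fun x => ?_) hKc
      unfold lag
      refine closure_minimal ?_ hKc
      intro v hv
      rw [Set.mem_add] at hv
      obtain ⟨zv, hzv, sv, hsv, rfl⟩ := hv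
      have hsv' : u - z' zv ≤ z' sv := by
        have hcl : closure (⋃ w ∈ g x, SMap y' z' w) ⊆ {s : Z | u - z' zv ≤ z' s} := by
          refine closure_minimal (Set.iUnion₂_subset fun w hw => ?_)
            (isClosed_le continuous_const z'.continuous)
          intro s hs
          have h3 := hy' x zv hzv w hw
          have h4 : u - z' zv ≤ y' w := by linarith
          exact le_trans h4 hs
        exact hcl hsv
      show u ≤ z' (zv + sv)
      rw [map_add]
      linarith
    have := hK hz₀d
    simp only [Set.mem_setOf_eq] at this
    linarith
end
end

section
/- (Dual attainment.) Let f and g be convex (i.e. their graphs are convex), assume the Slater condition (there exists x̄ ∈ X with f(x̄) ≠ ∅ and g(x̄) ∩ (−int D) ≠ ∅), and assume p ≠ Z. Then: (i) for every z* ∈ C+∖{0} with p ⊕ S(z*) ≠ Z there exists y* ∈ Y* such that p ⊕ S(z*) = h(y*,z*); (ii) for every z* ∈ C+∖{0} with p_{z*} > −∞ there exists y* ∈ Y* with p_{z*} = φ_{h,z*}(y*); (iii) the set Δ = {(y*,z*) ∈ Y*×(C+∖{0}) : Z ≠ p ⊕ S(z*) = h(y*,z*)} is nonempty, satisfies ⋂_{(y*,z*)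 ∈ Δ} h(y*,z*) = d, and {h(y*,z*) : (y*,z*) ∈ Δ} is exactly the set of maximal elements of {h(y*,z*) : (y*,z*) ∈ Y*×(C+∖{0})} with respect to the order A ≤ B ⟺ A ⊇ B; in particular Δ is a full solution of the dual problem of maximizing h over Y*×(C+∖{0}). -/
open Set Pointwise Topology Filter

noncomputable section

set_option linter.unusedSectionVars false
set_option linter.unusedVariables false
set_option maxHeartbeats 1000000

variable {X Y Z : Type*}
  [AddCommGroup X] [Module ℝ X] [TopologicalSpace X] [IsTopologicalAddGroup X]
  [ContinuousSMul ℝ X] [LocallyConvexSpace ℝ X]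
  [AddCommGroup Y] [Module ℝ Y] [TopologicalSpace Y] [IsTopologicalAddGroup Y]
  [ContinuousSMul ℝ Y] [LocallyConvexSpace ℝ Y]
  [AddCommGroup Z] [Module ℝ Z] [TopologicalSpace Z] [IsTopologicalAddGroup Z]
  [ContinuousSMul ℝ Z] [LocallyConvexSpace ℝ Z]

/-- The set `Δ = {(y*,z*) ∈ Y*×(C⁺∖{0}) | Z ≠ p ⊕ S(z*) = h(y*,z*)}`, where `p = v(0)`. -/
def Delta (C : Set Z) (f : X → Set Z) (g : X → Set Y) :
    Set ((Y →L[ℝ] ℝ) × (Z →L[ℝ] ℝ)) :=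
  {q | q.2 ∈ posDual C \ {0} ∧ closure (valFn f g 0 + SPos q.2) ≠ univ ∧
       closure (valFn f g 0 + SPos q.2) = dualObj f g q.1 q.2}

/-- The family `{h(y*,z*) | (y*,z*) ∈ Y*×(C⁺∖{0})}` of dual objective values. -/
def HFam (C : Set Z) (f : X → Set Z) (g : X → Set Y) : Set (Set Z) :=
  {A | ∃ y' : Y →L[ℝ] ℝ, ∃ z' ∈ posDual C \ {0}, A = dualObj f g y' z'}

/-! ### Auxiliary lemmas -/

section GenHelpers

variable {E : Type*} [AddCommGroup E] [TopologicalSpace E] [IsTopologicalAddGroup E]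

lemma aux_add_subset_closure_add (A B : Set E) : closure A + B ⊆ closure (A + B) := by
  rintro w hw
  rw [Set.mem_add] at hw
  obtain ⟨a, ha, b, hb, rfl⟩ := hw
  have himg : (· + b) '' A ⊆ A + B := by
    rintro _ ⟨a', ha', rfl⟩
    exact Set.add_mem_add ha' hb
  exact closure_mono himg (mem_closure_image (continuous_add_right b).continuousAt ha)

lemma aux_closure_closure_add (A B : Set E) : closure (closure A + B) = closure (A + B) :=
  Subset.antisymm (closure_minimal (aux_add_subset_closure_add A B) isClosed_closure)
    (closure_mono (Set.add_subset_add_right subset_closure))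

end GenHelpers

section UnitHelpers

variable {E : Type*} [AddCommGroup E] [Module ℝ E] [TopologicalSpace E]

lemma aux_exists_unit (z' : E →L[ℝ] ℝ) (h : z' ≠ 0) : ∃ z1, z' z1 = 1 := by
  obtain ⟨z₀, hz₀⟩ : ∃ z₀, z' z₀ ≠ 0 := by
    by_contra h'
    push_neg at h'
    exact h (ContinuousLinearMap.ext fun z => by simp [h' z])
  exact ⟨(z' z₀)⁻¹ • z₀, by simp [map_smul, inv_mul_cancel₀ hz₀]⟩

end UnitHelpers

lemma aux_biInf_coe_eq (T : Set ℝ) (hne : T.Nonempty) (hbdd : BddBelow T) :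
    ⨅ t ∈ T, (t : EReal) = ((sInf T : ℝ) : EReal) := by
  have := Monotone.map_csInf_of_continuousAt (f := (fun r : ℝ => (r : EReal))) (A := T)
    (continuous_coe_real_ereal.continuousAt)
    (fun a b h => EReal.coe_le_coe_iff.mpr h) hne hbdd
  rw [sInf_image] at this
  exact this.symm

lemma aux_biInf_coe_eq_bot (T : Set ℝ) (hbdd : ¬ BddBelow T) :
    ⨅ t ∈ T, (t : EReal) = ⊥ := by
  rw [EReal.eq_bot_iff_forall_lt]
  intro y
  rw [not_bddBelow_iff] at hbdd
  obtain ⟨t, htT, hty⟩ := hbdd (y - 1)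
  calc ⨅ t ∈ T, (t : EReal) ≤ (t : EReal) := biInf_le _ htT
    _ < (y : EReal) := by exact_mod_cast hty.trans_le (by linarith)

lemma aux_halfspace_prop (z₁ z₂ : Z →L[ℝ] ℝ) (h₁ : z₁ ≠ 0) (h₂ : z₂ ≠ 0) (a b : ℝ)
    (hsub : {z | a ≤ z₁ z} ⊆ {z | b ≤ z₂ z}) : SPos z₁ = SPos z₂ := by
  obtain ⟨w₀, hw₀⟩ := aux_exists_unit z₁ h₁
  have hker : ∀ v, z₁ v = 0 → z₂ v = 0 := by
    intro v hv
    by_contra hv2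
    have hmem : ∀ t : ℝ, b ≤ z₂ (a • w₀ + t • v) := by
      intro t
      refine hsub ?_
      show a ≤ z₁ (a • w₀ + t • v)
      simp [map_add, map_smul, hw₀, hv, smul_eq_mul]
    have := hmem ((b - 1 - z₂ (a • w₀)) / z₂ v)
    simp only [map_add, map_smul, smul_eq_mul] at this
    rw [div_mul_cancel₀ _ hv2] at this
    linarith
  set lam := z₂ w₀ with hlam
  have hrep : ∀ v, z₂ v = lam * z₁ v := by
    intro v
    have h0 : z₁ (v - z₁ v • w₀) = 0 := by
      simp [map_sub, map_smul, hw₀, smul_eq_mul]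
    have := hker _ h0
    rw [map_sub, map_smul, smul_eq_mul] at this
    have h3 : z₂ v = z₁ v * lam := by linarith
    rw [h3]; ring
  have hlamne : lam ≠ 0 := by
    intro h0
    apply h₂
    ext v
    simp [hrep v, h0]
  have hlampos : 0 < lam := by
    rcases lt_or_gt_of_ne hlamne with hneg | hpos
    · exfalso
      set t : ℝ := max a (b / lam + 1) with ht
      have hmem : a ≤ z₁ (t • w₀) := by
        simp only [map_smul, hw₀, smul_eq_mul, mul_one]
        exact le_max_left _ _
      have h2 : b ≤ z₂ (t • w₀) := hsub hmem
      have h3 : z₂ (t • w₀) = lam * t := by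
        rw [hrep, map_smul, smul_eq_mul, hw₀, mul_one]
      have h4 : t ≥ b / lam + 1 := le_max_right _ _
      have h5 : lam * t ≤ lam * (b / lam + 1) :=
        mul_le_mul_of_nonpos_left h4 (le_of_lt hneg)
      have h6 : lam * (b / lam + 1) = b + lam := by field_simp
      rw [h3] at h2
      linarith
    · exact hpos
  ext z
  show 0 ≤ z₁ z ↔ 0 ≤ z₂ z
  rw [hrep z]
  constructor
  · intro h; positivity
  · intro h
    by_contra hneg
    push_neg at hneg
    nlinarith

/-- Weak duality. -/
lemma aux_weak_duality (f : X → Set Z) (g : X → Set Y) (y' : Y →L[ℝ] ℝ) (z' : Z →L[ℝ] ℝ) :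
    closure (valFn f g 0 + SPos z') ⊆ dualObj f g y' z' := by
  have h1 : closure (valFn f g 0 + SPos z')
      = closure ((⋃ x ∈ {x : X | (0:Y) ∈ g x}, f x) + SPos z') := by
    simpa [valFn] using aux_closure_closure_add (⋃ x ∈ {x : X | (0:Y) ∈ g x}, f x) (SPos z')
  rw [h1]
  refine closure_mono ?_
  rintro w hw
  rw [Set.mem_add] at hw
  obtain ⟨a, ha, b, hb, rfl⟩ := hw
  simp only [mem_iUnion] at ha
  obtain ⟨x, hx0, hax⟩ := ha
  refine mem_iUnion.2 ⟨x, ?_⟩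
  have hbS : b ∈ closure (⋃ y ∈ g x, SMap y' z' y) :=
    subset_closure (mem_iUnion₂.2 ⟨0, hx0, by simpa [SMap, SPos] using hb⟩)
  exact subset_closure (Set.add_mem_add hax hbS)

/-- If the separation inequality holds, the dual objective is in the halfspace. -/
lemma aux_dualObj_subset_halfspace (f : X → Set Z) (g : X → Set Y)
    (y' : Y →L[ℝ] ℝ) (z' : Z →L[ℝ] ℝ) (m : ℝ)
    (hsep : ∀ x : X, ∀ y ∈ g x, ∀ z ∈ f x, m ≤ z' z + y' y) :
    dualObj f g y' z' ⊆ {z | m ≤ z' z} := by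
  have hcl : IsClosed {z : Z | m ≤ z' z} := isClosed_le continuous_const z'.continuous
  refine closure_minimal (iUnion_subset fun x => closure_minimal ?_ hcl) hcl
  rintro w hw
  rw [Set.mem_add] at hw
  obtain ⟨a, ha, b, hb, rfl⟩ := hw
  have hbK : b ∈ {v : Z | m - z' a ≤ z' v} := by
    have hK : (⋃ y ∈ g x, SMap y' z' y) ⊆ {v : Z | m - z' a ≤ z' v} := by
      rintro v hv
      simp only [mem_iUnion] at hv
      obtain ⟨y, hy, hv⟩ := hv
      have h1 := hsep x y hy a ha
      have h2 : m - z' a ≤ y' y := by linarith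
      exact h2.trans hv
    exact closure_minimal hK (isClosed_le continuous_const z'.continuous) hb
  have : m - z' a ≤ z' b := hbK
  simp only [mem_setOf_eq, map_add]
  linarith

/-- Halfspace characterization of `p ⊕ S(z')`. -/
lemma aux_M_eq_halfspace (f : X → Set Z) (g : X → Set Y) (z' : Z →L[ℝ] ℝ)
    (z1 : Z) (hz1 : z' z1 = 1)
    (hne : (⋃ x ∈ {x : X | (0:Y) ∈ g x}, f x).Nonempty)
    (hbdd : BddBelow (z' '' (⋃ x ∈ {x : X | (0:Y) ∈ g x}, f x))) :
    closure (valFn f g 0 + SPos z')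
      = {z | sInf (z' '' (⋃ x ∈ {x : X | (0:Y) ∈ g x}, f x)) ≤ z' z} := by
  set U := ⋃ x ∈ {x : X | (0:Y) ∈ g x}, f x with hU
  set m := sInf (z' '' U) with hm
  have h1 : closure (valFn f g 0 + SPos z') = closure (U + SPos z') := by
    simpa [valFn, hU] using aux_closure_closure_add U (SPos z')
  rw [h1]
  apply Subset.antisymm
  · refine closure_minimal ?_ (isClosed_le continuous_const z'.continuous)
    rintro w hw
    rw [Set.mem_add] at hw
    obtain ⟨a, ha, b, hb, rfl⟩ := hw
    have h2 : m ≤ z' a := csInf_le hbdd (mem_image_of_mem _ ha)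
    have h3 : (0:ℝ) ≤ z' b := hb
    simp only [mem_setOf_eq, map_add]
    linarith
  · rintro z (hz : m ≤ z' z)
    have htend : Tendsto (fun ε : ℝ => z + ε • z1) (𝓝[>] (0:ℝ)) (𝓝 z) := by
      have hc : Continuous (fun ε : ℝ => z + ε • z1) :=
        continuous_const.add (continuous_id.smul continuous_const)
      have h4 := hc.tendsto 0
      simp only [zero_smul, add_zero] at h4
      exact h4.mono_left nhdsWithin_le_nhds
    refine mem_closure_of_tendsto htend ?_
    filter_upwards [self_mem_nhdsWithin] with ε hε
    have hε' : (0:ℝ) < ε := hε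
    obtain ⟨t, htT, htlt⟩ := (csInf_lt_iff hbdd (hne.image _)).mp
      (lt_add_of_pos_right m hε')
    obtain ⟨a, haU, rfl⟩ := htT
    refine Set.mem_add.2 ⟨a, haU, z + ε • z1 - a, ?_, by abel⟩
    have h5 : z' (z + ε • z1 - a) = z' z + ε - z' a := by
      simp [map_add, map_sub, map_smul, hz1, smul_eq_mul]
    show (0:ℝ) ≤ z' (z + ε • z1 - a)
    rw [h5]
    linarith

/-- If the scalarized infimum is unbounded below, `p ⊕ S(z')` is everything. -/
lemma aux_M_eq_univ (f : X → Set Z) (g : X → Set Y) (z' : Z →L[ℝ] ℝ)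
    (hbdd : ¬ BddBelow (z' '' (⋃ x ∈ {x : X | (0:Y) ∈ g x}, f x))) :
    closure (valFn f g 0 + SPos z') = univ := by
  set U := ⋃ x ∈ {x : X | (0:Y) ∈ g x}, f x with hU
  rw [eq_univ_iff_forall]
  intro z
  have h1 : closure (valFn f g 0 + SPos z') = closure (U + SPos z') := by
    simpa [valFn, hU] using aux_closure_closure_add U (SPos z')
  rw [h1]
  refine subset_closure ?_
  rw [not_bddBelow_iff] at hbdd
  obtain ⟨t, htT, htlt⟩ := hbdd (z' z)
  obtain ⟨a, haU, rfl⟩ := htT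
  refine Set.mem_add.2 ⟨a, haU, z - a, ?_, by abel⟩
  show (0:ℝ) ≤ z' (z - a)
  rw [map_sub]
  linarith

/-- Core separation lemma: from a lower bound on the feasible values, produce a
Lagrange multiplier. -/
lemma aux_sep_lemma
    (D : Set Y) (hDconv : Convex ℝ D) (hDcone : ∀ t : ℝ, 0 < t → ∀ y ∈ D, t • y ∈ D)
    (f : X → Set Z) (g : X → Set Y)
    (hgD : ∀ x, g x + D ⊆ g x)
    (hfconv : Convex ℝ {q : X × Z | q.2 ∈ f q.1})
    (hgconv : Convex ℝ {q : X × Y | q.2 ∈ g q.1})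
    (z' : Z →L[ℝ] ℝ) (m : ℝ)
    (x₀ : X) (y₀ : Y) (z₀ : Z) (hy₀ : y₀ ∈ g x₀) (hy₀D : -y₀ ∈ interior D)
    (hz₀ : z₀ ∈ f x₀)
    (hm : ∀ x : X, (0:Y) ∈ g x → ∀ z ∈ f x, m ≤ z' z) :
    ∃ y' : Y →L[ℝ] ℝ, ∀ x : X, ∀ y ∈ g x, ∀ z ∈ f x, m ≤ z' z + y' y := by
  classical
  set A : Set (Y × ℝ) := {q | ∃ x, q.1 ∈ g x ∧ ∃ z ∈ f x, z' z ≤ q.2} with hA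
  have hAconv : Convex ℝ A := by
    rintro ⟨y1, r1⟩ ⟨x1, hy1, z1, hz1, hr1⟩ ⟨y2, r2⟩ ⟨x2, hy2, z2, hz2, hr2⟩ t s ht hs hts
    refine ⟨t • x1 + s • x2, ?_, t • z1 + s • z2, ?_, ?_⟩
    · have := hgconv (show ((x1, y1) : X × Y) ∈ _ from hy1)
        (show ((x2, y2) : X × Y) ∈ _ from hy2) ht hs hts
      simpa [Prod.smul_mk, Prod.mk_add_mk] using this
    · have := hfconv (show ((x1, z1) : X × Z) ∈ _ from hz1)
        (show ((x2, z2) : X × Z) ∈ _ from hz2) ht hs hts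
      simpa [Prod.smul_mk, Prod.mk_add_mk] using this
    · simp only [map_add, map_smul, smul_eq_mul, Prod.smul_mk, Prod.mk_add_mk]
      exact add_le_add (mul_le_mul_of_nonneg_left hr1 ht) (mul_le_mul_of_nonneg_left hr2 hs)
  set W : Set (Y × ℝ) := A + (interior D) ×ˢ Ioi (0:ℝ) with hW
  have hWopen : IsOpen W := IsOpen.add_left (isOpen_interior.prod isOpen_Ioi)
  have hWconv : Convex ℝ W := hAconv.add ((hDconv.interior).prod (convex_Ioi 0))
  have hWA : W ⊆ A := by
    rintro w hw
    rw [Set.mem_add] at hw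
    obtain ⟨⟨y1, r1⟩, ⟨x1, hy1, z1, hz1, hr1⟩, ⟨d, δ⟩, ⟨hd, hδ⟩, rfl⟩ := hw
    refine ⟨x1, hgD x1 (Set.add_mem_add hy1 (interior_subset hd)), z1, hz1, ?_⟩
    have : (0:ℝ) < δ := hδ
    simp only [Prod.mk_add_mk]
    linarith
  set B : Set (Y × ℝ) := {(0:Y)} ×ˢ Iio m with hB
  have hBconv : Convex ℝ B := (convex_singleton _).prod (convex_Iio m)
  have hdisj : Disjoint W B := by
    rw [Set.disjoint_left]
    rintro ⟨yy, rr⟩ hWmem ⟨hy0, hrm⟩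
    have hAmem : (yy, rr) ∈ A := hWA hWmem
    obtain ⟨x, hyg, z, hzf, hzr⟩ := hAmem
    have hy0' : yy = 0 := hy0
    rw [hy0'] at hyg
    have := hm x hyg z hzf
    have hrm' : rr < m := hrm
    dsimp only at hzr
    linarith
  obtain ⟨F, u, hFW, hFB⟩ := geometric_hahn_banach_open hWconv hWopen hBconv hdisj
  set s : ℝ := F (0, 1) with hs
  set y₁' : Y →L[ℝ] ℝ := F.comp (ContinuousLinearMap.inl ℝ Y ℝ) with hy₁'
  have hFdec : ∀ (yy : Y) (r : ℝ), F (yy, r) = y₁' yy + r * s := by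
    intro yy r
    have hsplit : ((yy, r) : Y × ℝ) = (yy, 0) + r • ((0:Y), (1:ℝ)) := by
      simp [Prod.ext_iff]
    rw [hsplit, map_add, map_smul]
    simp [hy₁', hs, smul_eq_mul]
  have hBu : ∀ r : ℝ, r < m → u ≤ r * s := by
    intro r hr
    have := hFB (0, r) ⟨rfl, hr⟩
    rwa [hFdec, map_zero, zero_add] at this
  have hscale : ∀ t : ℝ, 0 < t → t • (-y₀) ∈ interior D := by
    intro t ht
    have hopen : IsOpen (t • interior D) := isOpenMap_smul₀ (ne_of_gt ht) _ isOpen_interior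
    have hsub : t • interior D ⊆ D := by
      rintro _ ⟨d, hd, rfl⟩
      exact hDcone t ht d (interior_subset hd)
    exact interior_maximal hsub hopen (smul_mem_smul_set hy₀D)
  have hAle : ∀ a ∈ A, F a ≤ u := by
    intro a ha
    set c : ℝ := F (-y₀, 1) with hc
    have hmemW : ∀ t : ℝ, 0 < t → a + t • ((-y₀ : Y), (1:ℝ)) ∈ W := by
      intro t ht
      refine Set.add_mem_add ha ?_
      refine ⟨hscale t ht, ?_⟩
      simpa using ht
    have htend : Tendsto (fun t : ℝ => F a + t * c) (𝓝[>] (0:ℝ)) (𝓝 (F a)) := by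
      have hcont : Continuous (fun t : ℝ => F a + t * c) :=
        continuous_const.add (continuous_id.mul continuous_const)
      have h4 := hcont.tendsto 0
      simp only [zero_mul, add_zero] at h4
      exact h4.mono_left nhdsWithin_le_nhds
    refine le_of_tendsto htend ?_
    filter_upwards [self_mem_nhdsWithin] with t ht
    have ht' : (0:ℝ) < t := ht
    have h5 := hFW _ (hmemW t ht')
    rw [map_add, map_smul, smul_eq_mul] at h5
    exact (by linarith : F a + t * c ≤ u)
  have hsneg : s < 0 := by
    rcases lt_trichotomy s 0 with h | h | h
    · exact h
    · exfalso
      have hu0 : u ≤ 0 := by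
        have := hBu (m - 1) (by linarith)
        rwa [h, mul_zero] at this
      have hmem : ((0:Y), z' z₀ + 1) ∈ W := by
        have heq : ((0:Y), z' z₀ + 1) = ((y₀ : Y), z' z₀) + ((-y₀ : Y), (1:ℝ)) := by
          simp [Prod.ext_iff]
        rw [heq]
        exact Set.add_mem_add ⟨x₀, hy₀, z₀, hz₀, le_refl _⟩ ⟨hy₀D, by norm_num⟩
      have := hFW _ hmem
      rw [hFdec, map_zero, zero_add, h, mul_zero] at this
      linarith
    · exfalso
      set r : ℝ := min (m - 1) ((u - 1) / s) with hr
      have h1 : u ≤ r * s := hBu r (by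
        have : r ≤ m - 1 := min_le_left _ _
        linarith)
      have h2 : r * s ≤ ((u - 1) / s) * s :=
        mul_le_mul_of_nonneg_right (min_le_right _ _) (le_of_lt h)
      rw [div_mul_cancel₀ _ (ne_of_gt h)] at h2
      linarith
  have hums : u ≤ m * s := by
    refine le_of_forall_pos_le_add ?_
    intro δ hδ
    have hε : (0:ℝ) < δ / (-s) := div_pos hδ (by linarith)
    have := hBu (m - δ / (-s)) (by linarith)
    have hsne : s ≠ 0 := ne_of_lt hsneg
    have h2 : δ / (-s) * s = -δ := by
      rw [div_neg, neg_mul, div_mul_cancel₀ _ hsne]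
    have heq : (m - δ / (-s)) * s = m * s + δ := by
      rw [sub_mul, h2]; ring
    linarith [heq ▸ this]
  refine ⟨s⁻¹ • y₁', ?_⟩
  intro x y hy z hz
  have hmemA : ((y, z' z) : Y × ℝ) ∈ A := ⟨x, hy, z, hz, le_refl _⟩
  have h1 : y₁' y + z' z * s ≤ m * s := by
    have := hAle _ hmemA
    rw [hFdec] at this
    linarith
  have happ : (s⁻¹ • y₁') y = s⁻¹ * y₁' y := by
    simp [smul_eq_mul]
  rw [happ]
  have hinv : s * s⁻¹ = 1 := mul_inv_cancel₀ (ne_of_lt hsneg)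
  by_contra hcon
  push_neg at hcon
  have h3 := mul_lt_mul_of_pos_right hcon (neg_pos.mpr hsneg)
  have h5 : (z' z + s⁻¹ * y₁' y) * (-s) = -(z' z * s) - (s * s⁻¹) * y₁' y := by ring
  rw [hinv, one_mul] at h5
  linarith [h1, h3, h5]

/-- Strong duality with attainment. -/
lemma aux_strong_duality
    (D : Set Y) (hDconv : Convex ℝ D) (hDcone : ∀ t : ℝ, 0 < t → ∀ y ∈ D, t • y ∈ D)
    (f : X → Set Z) (g : X → Set Y)
    (hgD : ∀ x, g x + D ⊆ g x)
    (hfconv : Convex ℝ {q : X × Z | q.2 ∈ f q.1})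
    (hgconv : Convex ℝ {q : X × Y | q.2 ∈ g q.1})
    (x₀ : X) (y₀ : Y) (z₀ : Z) (hy₀ : y₀ ∈ g x₀) (hy₀D : -y₀ ∈ interior D)
    (hz₀ : z₀ ∈ f x₀)
    (z' : Z →L[ℝ] ℝ) (hz'ne : z' ≠ 0)
    (hbdd : BddBelow (z' '' (⋃ x ∈ {x : X | (0:Y) ∈ g x}, f x))) :
    ∃ y' : Y →L[ℝ] ℝ, closure (valFn f g 0 + SPos z') = dualObj f g y' z' ∧
      closure (valFn f g 0 + SPos z')
        = {z | sInf (z' '' (⋃ x ∈ {x : X | (0:Y) ∈ g x}, f x)) ≤ z' z} := by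
  have h0feas : (0:Y) ∈ g x₀ := by
    have := hgD x₀ (Set.add_mem_add hy₀ (interior_subset hy₀D))
    simpa using this
  have hne : (⋃ x ∈ {x : X | (0:Y) ∈ g x}, f x).Nonempty :=
    ⟨z₀, mem_biUnion h0feas hz₀⟩
  set m := sInf (z' '' (⋃ x ∈ {x : X | (0:Y) ∈ g x}, f x)) with hm
  have hmlb : ∀ x : X, (0:Y) ∈ g x → ∀ z ∈ f x, m ≤ z' z := by
    intro x hx z hz
    exact csInf_le hbdd ⟨z, mem_biUnion hx hz, rfl⟩
  obtain ⟨z1, hz1⟩ := aux_exists_unit z' hz'ne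
  obtain ⟨y', hy'⟩ := aux_sep_lemma D hDconv hDcone f g hgD hfconv hgconv z' m
    x₀ y₀ z₀ hy₀ hy₀D hz₀ hmlb
  have hM := aux_M_eq_halfspace f g z' z1 hz1 hne hbdd
  refine ⟨y', ?_, hM⟩
  refine Subset.antisymm (aux_weak_duality f g y' z') ?_
  rw [hM]
  exact aux_dualObj_subset_halfspace f g y' z' m hy'

/-- **Dual attainment.** Under convexity and the Slater condition, with `p ≠ Z`:
(i) for each `z* ∈ C⁺∖{0}` with `p ⊕ S(z*) ≠ Z` there is `y*` with `p ⊕ S(z*) = h(y*,z*)`;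
(ii) for each `z* ∈ C⁺∖{0}` with `p_{z*} > −∞` there is `y*` with `p_{z*} = φ_{h,z*}(y*)`;
(iii) `Δ` is nonempty, `⋂_{(y*,z*) ∈ Δ} h(y*,z*) = d`, and `{h(y*,z*) | (y*,z*) ∈ Δ}` is
exactly the set of maximal elements of `{h(y*,z*) | (y*,z*) ∈ Y*×(C⁺∖{0})}` w.r.t. the
order `A ≤ B ⟺ A ⊇ B`; in particular `Δ` is a full solution of the dual problem. -/
theorem dual_attainment
    (C : Set Z) (hCconv : Convex ℝ C) (hCcone : ∀ t : ℝ, 0 < t → ∀ z ∈ C, t • z ∈ C)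
    (hC0 : (0 : Z) ∈ C)
    (D : Set Y) (hDconv : Convex ℝ D) (hDcone : ∀ t : ℝ, 0 < t → ∀ y ∈ D, t • y ∈ D)
    (hD0 : (0 : Y) ∈ D)
    (f : X → Set Z) (g : X → Set Y)
    (hfF : ∀ x, f x = closure (f x + C))
    (hgF : ∀ x, g x = closure (g x + D))
    (hfconv : Convex ℝ {q : X × Z | q.2 ∈ f q.1})
    (hgconv : Convex ℝ {q : X × Y | q.2 ∈ g q.1})
    (slater : ∃ x : X, (f x).Nonempty ∧ (g x ∩ (-(interior D))).Nonempty)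
    (hp : valFn f g 0 ≠ univ) :
    (∀ z' ∈ posDual C \ {0}, closure (valFn f g 0 + SPos z') ≠ univ →
        ∃ y' : Y →L[ℝ] ℝ, closure (valFn f g 0 + SPos z') = dualObj f g y' z') ∧
    (∀ z' ∈ posDual C \ {0},
        ⊥ < (⨅ x ∈ {x : X | (0 : Y) ∈ g x}, scal z' (f x)) →
        ∃ y' : Y →L[ℝ] ℝ,
          (⨅ x ∈ {x : X | (0 : Y) ∈ g x}, scal z' (f x)) = scal z' (dualObj f g y' z')) ∧
    (Delta C f g).Nonempty ∧
    (⋂ q ∈ Delta C f g, dualObj f g q.1 q.2)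
      = (⋂ (y' : Y →L[ℝ] ℝ), ⋂ z' ∈ posDual C \ {0}, dualObj f g y' z') ∧
    {A : Set Z | ∃ q ∈ Delta C f g, A = dualObj f g q.1 q.2}
      = {A ∈ HFam C f g | ∀ B ∈ HFam C f g, B ⊆ A → B = A} := by
  classical
  obtain ⟨x₀, ⟨z₀, hz₀⟩, ⟨y₀, hy₀g, hy₀D'⟩⟩ := slater
  have hy₀D : -y₀ ∈ interior D := hy₀D'
  have hgD : ∀ x, g x + D ⊆ g x := fun x => subset_closure.trans (hgF x).symm.subset
  have hfC : ∀ x, f x + C ⊆ f x := fun x => subset_closure.trans (hfF x).symm.subset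
  have h0feas : (0:Y) ∈ g x₀ := by
    have := hgD x₀ (Set.add_mem_add hy₀g (interior_subset hy₀D))
    simpa using this
  set U := ⋃ x ∈ {x : X | (0:Y) ∈ g x}, f x with hUdef
  have hzU : z₀ ∈ U := mem_biUnion h0feas hz₀
  have hne : U.Nonempty := ⟨z₀, hzU⟩
  have hne0 : ∀ z' : Z →L[ℝ] ℝ, z' ∈ posDual C \ {0} → z' ≠ 0 := by
    intro z' h
    simpa [Set.mem_singleton_iff] using h.2
  -- main strong duality tool
  have part1 : ∀ z' : Z →L[ℝ] ℝ, z' ≠ 0 → closure (valFn f g 0 + SPos z') ≠ univ →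
      ∃ y' : Y →L[ℝ] ℝ, closure (valFn f g 0 + SPos z') = dualObj f g y' z' ∧
        closure (valFn f g 0 + SPos z') = {z | sInf (z' '' U) ≤ z' z} := by
    intro z' hz' hMne
    have hbdd : BddBelow (z' '' U) := by
      by_contra hb
      exact hMne (aux_M_eq_univ f g z' hb)
    exact aux_strong_duality D hDconv hDcone f g hgD hfconv hgconv
      x₀ y₀ z₀ hy₀g hy₀D hz₀ z' hz' hbdd
  -- convexity of U and p
  have hFeasconv : Convex ℝ {x : X | (0:Y) ∈ g x} := by
    intro x1 h1 x2 h2 t s ht hs hts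
    have := hgconv (show ((x1, (0:Y)) : X × Y) ∈ _ from h1)
      (show ((x2, (0:Y)) : X × Y) ∈ _ from h2) ht hs hts
    simpa [Prod.smul_mk, Prod.mk_add_mk] using this
  have hUconv : Convex ℝ U := by
    rintro w1 hw1 w2 hw2 t s ht hs hts
    rw [hUdef, mem_iUnion₂] at hw1 hw2
    obtain ⟨x1, hx1, hw1⟩ := hw1
    obtain ⟨x2, hx2, hw2⟩ := hw2
    have hxmem : t • x1 + s • x2 ∈ {x : X | (0:Y) ∈ g x} := hFeasconv hx1 hx2 ht hs hts
    have hz : t • w1 + s • w2 ∈ f (t • x1 + s • x2) := by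
      have := hfconv (show ((x1, w1) : X × Z) ∈ _ from hw1)
        (show ((x2, w2) : X × Z) ∈ _ from hw2) ht hs hts
      simpa [Prod.smul_mk, Prod.mk_add_mk] using this
    exact mem_iUnion₂.mpr ⟨_, hxmem, hz⟩
  have hpconv : Convex ℝ (valFn f g 0) := hUconv.closure
  have hpclosed : IsClosed (valFn f g 0) := isClosed_closure
  have hpC : valFn f g 0 + C ⊆ valFn f g 0 := by
    have hUC : U + C ⊆ U := by
      rintro w hw
      rw [Set.mem_add] at hw
      obtain ⟨a, ha, c, hc, rfl⟩ := hw
      rw [hUdef, mem_iUnion₂] at ha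
      obtain ⟨x, hx, ha⟩ := ha
      exact mem_biUnion hx (hfC x (Set.add_mem_add ha hc))
    calc valFn f g 0 + C = closure U + C := rfl
      _ ⊆ closure (U + C) := aux_add_subset_closure_add U C
      _ ⊆ closure U := closure_mono hUC
  have hzbar : z₀ ∈ valFn f g 0 := subset_closure hzU
  -- part (iii) nonemptiness: find a good z*
  have part3 : (Delta C f g).Nonempty := by
    obtain ⟨zout, hzout⟩ := (ne_univ_iff_exists_notMem _).mp hp
    obtain ⟨F, u, hFp, hFz⟩ := geometric_hahn_banach_closed_point hpconv hpclosed hzout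
    set zstar : Z →L[ℝ] ℝ := -F with hzstar
    have hFz₀ : F z₀ < u := hFp _ hzbar
    have hCpos : zstar ∈ posDual C := by
      intro c hc
      show (0:ℝ) ≤ (-F) c
      rw [ContinuousLinearMap.neg_apply]
      by_contra hcon
      push_neg at hcon
      have hFc : 0 < F c := by linarith
      set t : ℝ := (u - F z₀ + 1) / F c with htdef
      have ht : 0 < t := div_pos (by linarith) hFc
      have hmem : z₀ + t • c ∈ valFn f g 0 :=
        hpC (Set.add_mem_add hzbar (hCcone t ht c hc))
      have := hFp _ hmem
      rw [map_add, map_smul, smul_eq_mul, htdef, div_mul_cancel₀ _ (ne_of_gt hFc)] at this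
      linarith
    have hzsne : zstar ≠ 0 := by
      intro h0
      have hF0 : F = 0 := neg_eq_zero.mp h0
      rw [hF0] at hFz₀ hFz
      simp at hFz₀ hFz
      linarith
    have hMne : closure (valFn f g 0 + SPos zstar) ≠ univ := by
      have hsubK : valFn f g 0 + SPos zstar ⊆ {z | F z ≤ u} := by
        rintro w hw
        rw [Set.mem_add] at hw
        obtain ⟨a, ha, v, hv, rfl⟩ := hw
        have h1 : F a < u := hFp _ ha
        have h2 : (0:ℝ) ≤ (-F) v := hv
        rw [ContinuousLinearMap.neg_apply] at h2
        show F (a + v) ≤ u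
        rw [map_add]
        linarith
      have hcl : closure (valFn f g 0 + SPos zstar) ⊆ {z | F z ≤ u} :=
        closure_minimal hsubK (isClosed_le F.continuous continuous_const)
      intro hu
      have : zout ∈ {z | F z ≤ u} := hcl (hu ▸ mem_univ zout)
      have : F zout ≤ u := this
      linarith
    obtain ⟨ystar, hMeq, _⟩ := part1 zstar hzsne hMne
    exact ⟨(ystar, zstar), ⟨⟨hCpos, fun h => hzsne (by simpa using h)⟩, hMne, hMeq⟩⟩
  -- helper: from a good z' get a Delta element
  have hgood : ∀ z' : Z →L[ℝ] ℝ, z' ∈ posDual C \ {0} →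
      closure (valFn f g 0 + SPos z') ≠ univ →
      ∃ y₀' : Y →L[ℝ] ℝ, ((y₀', z') ∈ Delta C f g) ∧
        dualObj f g y₀' z' = closure (valFn f g 0 + SPos z') := by
    intro z' hz' hMne
    obtain ⟨y₀', hMeq, _⟩ := part1 z' (hne0 z' hz') hMne
    exact ⟨y₀', ⟨hz', hMne, hMeq⟩, hMeq.symm⟩
  refine ⟨?_, ?_, part3, ?_, ?_⟩
  -- Part (i)
  · intro z' hz' hMne
    obtain ⟨y', hMeq, _⟩ := part1 z' (hne0 z' hz') hMne
    exact ⟨y', hMeq⟩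
  -- Part (ii)
  · intro z' hz' hb
    have hz'ne := hne0 z' hz'
    have hLHS : (⨅ x ∈ {x : X | (0:Y) ∈ g x}, scal z' (f x)) = ⨅ t ∈ z' '' U, (t : EReal) := by
      rw [iInf_image]
      simp only [scal, hUdef, iInf_iUnion]
    have hbdd : BddBelow (z' '' U) := by
      by_contra hbb
      rw [hLHS, aux_biInf_coe_eq_bot _ hbb] at hb
      exact lt_irrefl _ hb
    set m := sInf (z' '' U) with hm
    obtain ⟨z1, hz1⟩ := aux_exists_unit z' hz'ne
    have hM := aux_M_eq_halfspace f g z' z1 hz1 hne hbdd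
    have hMne : closure (valFn f g 0 + SPos z') ≠ univ := by
      rw [hM]
      intro hcontra
      have h1 : ((m - 1) • z1 : Z) ∈ {z | sInf (z' '' U) ≤ z' z} := by
        rw [hcontra]; exact mem_univ _
      have h2 : sInf (z' '' U) ≤ z' ((m - 1) • z1) := h1
      rw [map_smul, smul_eq_mul, hz1, mul_one] at h2
      rw [← hm] at h2
      linarith
    obtain ⟨y', hMeq, hMchar⟩ := part1 z' hz'ne hMne
    refine ⟨y', ?_⟩
    have hdchar : dualObj f g y' z' = {z | m ≤ z' z} := hMeq.symm.trans hMchar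
    have hscal : scal z' (dualObj f g y' z') = (m : EReal) := by
      rw [hdchar]
      apply le_antisymm
      · have hmem : (m • z1 : Z) ∈ {z | m ≤ z' z} := by
          show m ≤ z' (m • z1)
          rw [map_smul, smul_eq_mul, hz1, mul_one]
        calc scal z' {z | m ≤ z' z} ≤ ((z' (m • z1) : ℝ) : EReal) := iInf₂_le _ hmem
          _ = (m : EReal) := by rw [map_smul, smul_eq_mul, hz1, mul_one]
      · exact le_iInf₂ fun z hz => EReal.coe_le_coe_iff.mpr hz
    rw [hLHS, aux_biInf_coe_eq _ (hne.image _) hbdd, hscal]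
  -- Part (iv): the two intersections agree
  · apply Subset.antisymm
    · refine subset_iInter fun y' => subset_iInter₂ fun z' hz' => ?_
      by_cases hMu : closure (valFn f g 0 + SPos z') = univ
      · have : dualObj f g y' z' = univ :=
          eq_univ_of_univ_subset (hMu ▸ aux_weak_duality f g y' z')
        rw [this]
        exact subset_univ _
      · obtain ⟨y₀', hqΔ, heq⟩ := hgood z' hz' hMu
        calc (⋂ q ∈ Delta C f g, dualObj f g q.1 q.2)
            ⊆ dualObj f g y₀' z' := iInter₂_subset ((y₀', z') : _ × _) hqΔ
          _ = closure (valFn f g 0 + SPos z') := heq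
          _ ⊆ dualObj f g y' z' := aux_weak_duality f g y' z'
    · refine subset_iInter₂ fun q hq => ?_
      exact (iInter_subset _ q.1).trans (iInter₂_subset q.2 hq.1)
  -- Part (v): maximal elements
  · ext A
    simp only [mem_setOf_eq, sep_setOf]
    constructor
    · rintro ⟨q, hqΔ, rfl⟩
      obtain ⟨hq2, hMne, hMeq⟩ := hqΔ
      refine ⟨⟨q.1, q.2, hq2, rfl⟩, ?_⟩
      rintro B ⟨y'', z'', hz''mem, rfl⟩ hBsub
      have hAchar : dualObj f g q.1 q.2 = closure (valFn f g 0 + SPos q.2) := hMeq.symm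
      have hAne : dualObj f g q.1 q.2 ≠ univ := by rw [hAchar]; exact hMne
      have hM''ne : closure (valFn f g 0 + SPos z'') ≠ univ := by
        intro hu
        have hBu : dualObj f g y'' z'' = univ :=
          eq_univ_of_univ_subset (hu ▸ aux_weak_duality f g y'' z'')
        exact hAne (eq_univ_of_univ_subset (hBu ▸ hBsub))
      have hz''ne := hne0 z'' hz''mem
      have hq2ne := hne0 q.2 hq2
      have hbdd'' : BddBelow (z'' '' U) := by
        by_contra hbb; exact hM''ne (aux_M_eq_univ f g z'' hbb)
      have hbddq : BddBelow (q.2 '' U) := by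
        by_contra hbb; exact hMne (aux_M_eq_univ f g q.2 hbb)
      obtain ⟨z1'', hz1''⟩ := aux_exists_unit z'' hz''ne
      obtain ⟨z1q, hz1q⟩ := aux_exists_unit q.2 hq2ne
      have hchar'' := aux_M_eq_halfspace f g z'' z1'' hz1'' hne hbdd''
      have hcharq := aux_M_eq_halfspace f g q.2 z1q hz1q hne hbddq
      have hsub : {z | sInf (z'' '' U) ≤ z'' z} ⊆ {z | sInf (q.2 '' U) ≤ q.2 z} := by
        calc {z | sInf (z'' '' U) ≤ z'' z}
            = closure (valFn f g 0 + SPos z'') := hchar''.symm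
          _ ⊆ dualObj f g y'' z'' := aux_weak_duality f g y'' z''
          _ ⊆ dualObj f g q.1 q.2 := hBsub
          _ = closure (valFn f g 0 + SPos q.2) := hAchar
          _ = {z | sInf (q.2 '' U) ≤ q.2 z} := hcharq
      have hSP : SPos z'' = SPos q.2 :=
        aux_halfspace_prop z'' q.2 hz''ne hq2ne _ _ hsub
      refine Subset.antisymm hBsub ?_
      calc dualObj f g q.1 q.2 = closure (valFn f g 0 + SPos q.2) := hAchar
        _ = closure (valFn f g 0 + SPos z'') := by rw [hSP]
        _ ⊆ dualObj f g y'' z'' := aux_weak_duality f g y'' z''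
    · rintro ⟨⟨y', z', hz'mem, rfl⟩, hmax⟩
      by_cases hMu : closure (valFn f g 0 + SPos z') = univ
      · exfalso
        have hAuniv : dualObj f g y' z' = univ :=
          eq_univ_of_univ_subset (hMu ▸ aux_weak_duality f g y' z')
        obtain ⟨q₀, hq₀⟩ := part3
        obtain ⟨hq₀2, hq₀ne, hq₀eq⟩ := hq₀
        have hB₀mem : dualObj f g q₀.1 q₀.2 ∈ HFam C f g := ⟨q₀.1, q₀.2, hq₀2, rfl⟩
        have hB₀sub : dualObj f g q₀.1 q₀.2 ⊆ dualObj f g y' z' := by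
          rw [hAuniv]; exact subset_univ _
        have := hmax _ hB₀mem hB₀sub
        rw [hAuniv] at this
        exact hq₀ne (hq₀eq.trans this)
      · obtain ⟨y₀', hqΔ, heq⟩ := hgood z' hz'mem hMu
        have hsub : dualObj f g y₀' z' ⊆ dualObj f g y' z' := by
          rw [heq]
          exact aux_weak_duality f g y' z'
        have hBA := hmax _ ⟨y₀', z', hz'mem, rfl⟩ hsub
        exact ⟨(y₀', z'), hqΔ, hBA.symm⟩
end
end

section
/- (Set-valued Fenchel–Moreau theorem.) Let f : X → P(Z) be a convex set-valued map (its graph is convex) with f(x) ∈ G(Z,C) for all x ∈ X, such that there is x₀ ∈ X with f(x₀) ≠ ∅ and (cl f)(x) ≠ Z for all x ∈ X. Then cl f = f**, i.e. for every x ∈ X: {z : (x,z) ∈ cl(graph f)} = ⋂_{(x*,z*) ∈ X*×(C+∖{0})} [−f*(x*,z*) + S_{(x*,z*)}(x)]. -/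
open Set Pointwise Topology Filter

noncomputable section

variable {X Y Z : Type*}
  [AddCommGroup X] [Module ℝ X] [TopologicalSpace X] [IsTopologicalAddGroup X]
  [ContinuousSMul ℝ X] [LocallyConvexSpace ℝ X]
  [AddCommGroup Y] [Module ℝ Y] [TopologicalSpace Y] [IsTopologicalAddGroup Y]
  [ContinuousSMul ℝ Y] [LocallyConvexSpace ℝ Y]
  [AddCommGroup Z] [Module ℝ Z] [TopologicalSpace Z] [IsTopologicalAddGroup Z]
  [ContinuousSMul ℝ Z] [LocallyConvexSpace ℝ Z]

set_option maxHeartbeats 1000000 in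
/-- **Set-valued Fenchel–Moreau theorem.** Let `f : X → P(Z)` be convex (convex graph) with
`f(x) ∈ G(Z,C)` for all `x`, such that `f(x₀) ≠ ∅` for some `x₀` and `(cl f)(x) ≠ Z` for all
`x`. Then `cl f = f**`: for every `x`,
`{z | (x,z) ∈ cl(graph f)} = ⋂_{(x*,z*) ∈ X*×(C⁺∖{0})} [−f*(x*,z*) + S_{(x*,z*)}(x)]`,
where `−f*(x*,z*) = cl ⋃_u [f(u) + S_{(x*,z*)}(−u)]`. -/
theorem fenchel_moreau_set_valued
    (C : Set Z) (hCconv : Convex ℝ C) (hCcone : ∀ t : ℝ, 0 < t → ∀ z ∈ C, t • z ∈ C)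
    (hC0 : (0 : Z) ∈ C)
    (f : X → Set Z)
    (hfconv : Convex ℝ {q : X × Z | q.2 ∈ f q.1})
    (hfG : ∀ x, f x = closure (convexHull ℝ (f x + C)))
    (hx0 : ∃ x0 : X, (f x0).Nonempty)
    (hclf : ∀ x : X, {z : Z | (x, z) ∈ closure {q : X × Z | q.2 ∈ f q.1}} ≠ univ) :
    ∀ x : X,
      {z : Z | (x, z) ∈ closure {q : X × Z | q.2 ∈ f q.1}}
        = ⋂ (x' : X →L[ℝ] ℝ), ⋂ z' ∈ posDual C \ {0},
            (closure (⋃ u : X, (f u + SMap x' z' (-u))) + SMap x' z' x) := by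
  obtain ⟨x0, v0, hv0⟩ := hx0
  have hfC : ∀ u, f u + C ⊆ f u := fun u => by
    calc f u + C ⊆ convexHull ℝ (f u + C) := subset_convexHull ℝ _
      _ ⊆ closure (convexHull ℝ (f u + C)) := subset_closure
      _ = f u := (hfG u).symm
  -- Any functional bounding `z'' v - x'' u` from below on the graph has `z'' ∈ C⁺`.
  have hpos : ∀ (x'' : X →L[ℝ] ℝ) (z'' : Z →L[ℝ] ℝ) (c'' : ℝ),
      (∀ u, ∀ v ∈ f u, c'' ≤ z'' v - x'' u) → z'' ∈ posDual C := by
    intro x'' z'' c'' hsep c hc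
    by_contra hneg
    push_neg at hneg
    have hzc : z'' c ≠ 0 := ne_of_lt hneg
    set t : ℝ := (|c'' + x'' x0 - z'' v0| + 1) / (-(z'' c)) with ht
    have htpos : 0 < t := div_pos (by positivity) (by linarith)
    have hmem : v0 + t • c ∈ f x0 := hfC x0 (add_mem_add hv0 (hCcone t htpos c hc))
    have h2 := hsep x0 _ hmem
    have h3 : z'' (v0 + t • c) = z'' v0 + t * z'' c := by
      simp [map_add, map_smul, smul_eq_mul]
    have h4 : t * z'' c = -(|c'' + x'' x0 - z'' v0| + 1) := by
      rw [ht, div_mul_eq_mul_div, div_neg, mul_div_cancel_right₀ _ hzc]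
    have h6 := neg_abs_le (c'' + x'' x0 - z'' v0)
    have h5 := le_abs_self (c'' + x'' x0 - z'' v0)
    rw [h3, h4] at h2
    linarith
  intro x
  ext z
  simp only [mem_iInter, mem_setOf_eq]
  -- Any strictly separating functional with `z'' ∈ C⁺ \ {0}` contradicts membership in the
  -- biconjugate.
  have hcontra : ∀ (x'' : X →L[ℝ] ℝ) (z'' : Z →L[ℝ] ℝ) (c'' : ℝ),
      (∀ u, ∀ v ∈ f u, c'' ≤ z'' v - x'' u) →
      z ∈ closure (⋃ u : X, (f u + SMap x'' z'' (-u))) + SMap x'' z'' x →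
      c'' + x'' x ≤ z'' z := by
    intro x'' z'' c'' hsep hzm
    obtain ⟨a, ha, s, hs, rfl⟩ := Set.mem_add.mp hzm
    have hA : closure (⋃ u : X, (f u + SMap x'' z'' (-u))) ⊆ {w | c'' ≤ z'' w} := by
      apply closure_minimal
      · rintro w hw
        obtain ⟨u, hu⟩ := mem_iUnion.mp hw
        obtain ⟨v, hv, s', hs', rfl⟩ := Set.mem_add.mp hu
        have h1' : x'' (-u) ≤ z'' s' := hs'
        have h1 := hsep u v hv
        simp only [map_neg] at h1'
        simp only [mem_setOf_eq, map_add]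
        linarith
      · exact isClosed_le continuous_const z''.continuous
    have h1 : c'' ≤ z'' a := hA ha
    have h2 : x'' x ≤ z'' s := hs
    simp only [map_add]
    linarith
  constructor
  · -- easy inclusion
    intro hz x' z' hz'
    obtain ⟨hz'C, hz'0⟩ := hz'
    rw [mem_singleton_iff] at hz'0
    obtain ⟨e0, he0⟩ : ∃ e0, z' e0 ≠ 0 := by
      by_contra hcon
      push_neg at hcon
      exact hz'0 (ContinuousLinearMap.ext fun y => by simp [hcon y])
    set e : Z := (z' e0)⁻¹ • e0 with he
    have hze : z' e = 1 := by
      simp [he, map_smul, smul_eq_mul, inv_mul_cancel₀ he0]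
    have key : ∀ ε : ℝ, 0 < ε → ∃ u, ∃ v ∈ f u,
        z' v - x' u < (z' z - x' x) + ε := by
      intro ε hε
      have hU : IsOpen {q : X × Z | z' q.2 - x' q.1 < z' z - x' x + ε} :=
        isOpen_lt ((z'.continuous.comp continuous_snd).sub
          (x'.continuous.comp continuous_fst)) continuous_const
      obtain ⟨⟨u, v⟩, hq1, hq2⟩ := mem_closure_iff.mp hz _ hU (by simp only [mem_setOf_eq]; linarith)
      exact ⟨u, v, hq2, hq1⟩
    set w : Z := z - (x' x) • e with hw
    have hwA : w ∈ closure (⋃ u : X, (f u + SMap x' z' (-u))) := by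
      have htend : Filter.Tendsto (fun n : ℕ => w + (1 / (n + 1 : ℝ)) • e)
          Filter.atTop (𝓝 w) := by
        have h1 : Filter.Tendsto (fun n : ℕ => (1 / (n + 1 : ℝ))) Filter.atTop (𝓝 0) :=
          tendsto_one_div_add_atTop_nhds_zero_nat
        simpa using tendsto_const_nhds.add (h1.smul_const e)
      refine mem_closure_of_tendsto htend (Filter.Eventually.of_forall fun n => ?_)
      have hε : (0:ℝ) < 1 / (n + 1 : ℝ) := by positivity
      obtain ⟨u, v, hv, hlt⟩ := key _ hε
      refine mem_iUnion.mpr ⟨u, Set.mem_add.mpr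
        ⟨v, hv, w + (1/(n+1:ℝ)) • e - v, ?_, by abel⟩⟩
      show x' (-u) ≤ z' (w + (1/(n+1:ℝ)) • e - v)
      have hcomp : z' (w + (1/(n+1:ℝ)) • e - v)
          = (z' z - x' x) + 1/(n+1:ℝ) - z' v := by
        simp [hw, map_add, map_sub, map_smul, smul_eq_mul, hze]
      rw [hcomp, map_neg]
      linarith
    refine Set.mem_add.mpr ⟨w, hwA, (x' x) • e, ?_, by simp [hw]⟩
    show x' x ≤ z' ((x' x) • e)
    simp [map_smul, smul_eq_mul, hze]
  · -- hard inclusion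
    intro h
    by_contra hzn
    have hGconv : Convex ℝ (closure {q : X × Z | q.2 ∈ f q.1}) := hfconv.closure
    obtain ⟨Λ, c, hΛ1, hΛ2⟩ :=
      geometric_hahn_banach_closed_point hGconv isClosed_closure hzn
    set x's : X →L[ℝ] ℝ := Λ.comp (ContinuousLinearMap.inl ℝ X Z) with hx's
    set z's : Z →L[ℝ] ℝ := -(Λ.comp (ContinuousLinearMap.inr ℝ X Z)) with hz's
    have hdecomp : ∀ (u : X) (v : Z), Λ (u, v) = x's u - z's v := by
      intro u v
      have huv : (u, v) = (u, (0:Z)) + ((0:X), v) := by simp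
      rw [huv, map_add]
      simp [hx's, hz's]
    have hsep : ∀ u, ∀ v ∈ f u, -c < z's v - x's u := by
      intro u v hv
      have h1 := hΛ1 (u, v) (subset_closure hv)
      rw [hdecomp] at h1
      linarith
    have hpt : z's z - x's x < -c := by
      have h1 := hΛ2
      rw [hdecomp] at h1
      linarith
    by_cases hz0 : z's = 0
    · -- the separating functional vanishes on Z; fix it using a second separation
      have hx'neg : ∀ u, ∀ v ∈ f u, -c < -x's u := by
        intro u v hv
        have h1 := hsep u v hv
        rw [hz0] at h1
        simpa using h1
      have hptx : -x's x < -c := by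
        rw [hz0] at hpt
        simpa using hpt
      obtain ⟨zh, hzh⟩ : ∃ zh : Z, (x0, zh) ∉ closure {q : X × Z | q.2 ∈ f q.1} := by
        by_contra hall
        push_neg at hall
        exact hclf x0 (eq_univ_iff_forall.mpr fun zz => hall zz)
      obtain ⟨Λ2, c2, hΛ21, hΛ22⟩ :=
        geometric_hahn_banach_closed_point hGconv isClosed_closure hzh
      set x2 : X →L[ℝ] ℝ := Λ2.comp (ContinuousLinearMap.inl ℝ X Z) with hx2
      set z2 : Z →L[ℝ] ℝ := -(Λ2.comp (ContinuousLinearMap.inr ℝ X Z)) with hz2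
      have hdecomp2 : ∀ (u : X) (v : Z), Λ2 (u, v) = x2 u - z2 v := by
        intro u v
        have huv : (u, v) = (u, (0:Z)) + ((0:X), v) := by simp
        rw [huv, map_add]
        simp [hx2, hz2]
      have hsep2 : ∀ u, ∀ v ∈ f u, -c2 < z2 v - x2 u := by
        intro u v hv
        have h1 := hΛ21 (u, v) (subset_closure hv)
        rw [hdecomp2] at h1
        linarith
      have hpt2 : z2 zh - x2 x0 < -c2 := by
        have h1 := hΛ22
        rw [hdecomp2] at h1
        linarith
      have hz2C : z2 ∈ posDual C := hpos x2 z2 (-c2) (fun u v hv => (hsep2 u v hv).le)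
      have hz2ne : z2 ≠ 0 := by
        intro h0
        have h1 := hsep2 x0 v0 hv0
        rw [h0] at h1 hpt2
        simp only [ContinuousLinearMap.zero_apply, zero_sub, neg_lt_neg_iff] at h1 hpt2
        linarith
      have hP : 0 < x's x - c := by linarith
      set E : ℝ := z2 z - x2 x + c2 with hE
      set s : ℝ := (|E| + 1) / (x's x - c) with hs
      have hspos : 0 < s := div_pos (by positivity) hP
      have hsP : s * (x's x - c) = |E| + 1 := by
        rw [hs]
        field_simp
      have hsep3 : ∀ u, ∀ v ∈ f u, (-c2 + s * (-c)) ≤ z2 v - (x2 + s • x's) u := by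
        intro u v hv
        have h1 := hsep2 u v hv
        have h2 := hx'neg u v hv
        have h3 : s * (-c) ≤ s * (-x's u) := by
          apply mul_le_mul_of_nonneg_left h2.le hspos.le
        simp only [ContinuousLinearMap.add_apply, ContinuousLinearMap.smul_apply,
          smul_eq_mul]
        nlinarith
      have hfin := hcontra (x2 + s • x's) z2 (-c2 + s * (-c)) hsep3
        (h (x2 + s • x's) z2 ⟨hz2C, hz2ne⟩)
      have hEabs := le_abs_self E
      simp only [ContinuousLinearMap.add_apply, ContinuousLinearMap.smul_apply,
        smul_eq_mul] at hfin
      nlinarith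
    · -- the separating functional is already fine
      have hz'C : z's ∈ posDual C := hpos x's z's (-c) (fun u v hv => (hsep u v hv).le)
      have hfin := hcontra x's z's (-c) (fun u v hv => (hsep u v hv).le)
        (h x's z's ⟨hz'C, hz0⟩)
      linarith
end
end

section
/- (Strong duality via compactness.) Let f : X → P(Z) with f(x) ∈ G(Z,C) for all x and g : X → P(Y) with g(x) ∈ G(Y,D) for all x be closed set-valued maps (their graphs are closed). Assume there exist z*₀ ∈ C+ and y*₀ ∈ D+ such that for every r ∈ ℝ the sublevel set {x ∈ X : φ_{f,z*₀}(x) + φ_{g,y*₀}(x) ≤ r} is compact. Then the value function v(y) = cl(⋃{f(x) : x ∈ X, y ∈ g(x)}) is closed (its graph is closed). If, additionally, f and g are convex (their graphs are convex) and there exists x ∈ X with 0 ∈ g(x) and f(x) ≠ ∅, then strong duality holds: v(0) = p = d. -/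
open Set Pointwise Topology Filter

noncomputable section

variable {X Y Z : Type*}
  [AddCommGroup X] [Module ℝ X] [TopologicalSpace X] [IsTopologicalAddGroup X]
  [ContinuousSMul ℝ X] [LocallyConvexSpace ℝ X]
  [AddCommGroup Y] [Module ℝ Y] [TopologicalSpace Y] [IsTopologicalAddGroup Y]
  [ContinuousSMul ℝ Y] [LocallyConvexSpace ℝ Y]
  [AddCommGroup Z] [Module ℝ Z] [TopologicalSpace Z] [IsTopologicalAddGroup Z]
  [ContinuousSMul ℝ Z] [LocallyConvexSpace ℝ Z]

/-- Auxiliary: the graph `B = {(y,z) | ∃ x, y ∈ g x ∧ z ∈ f x}` is closed under the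
closedness and inf-compactness hypotheses. -/
lemma graphSet_closed
    {C : Set Z} {D : Set Y}
    {f : X → Set Z} {g : X → Set Y}
    (hfclosed : IsClosed {q : X × Z | q.2 ∈ f q.1})
    (hgclosed : IsClosed {q : X × Y | q.2 ∈ g q.1})
    (hcompact : ∃ z0 ∈ posDual C, ∃ y0 ∈ posDual D,
        ∀ r : ℝ, IsCompact {x : X | eadd (scal z0 (f x)) (scal y0 (g x)) ≤ (r : EReal)}) :
    IsClosed {q : Y × Z | ∃ x, q.1 ∈ g x ∧ q.2 ∈ f x} := by
  obtain ⟨z0, hz0, y0, hy0, hK⟩ := hcompact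
  set B : Set (Y × Z) := {q | ∃ x, q.1 ∈ g x ∧ q.2 ∈ f x} with hBdef
  rw [← closure_subset_iff_isClosed]
  intro q hq
  set F : Filter (Y × Z) := 𝓝 q ⊓ 𝓟 B with hFdef
  haveI hF : F.NeBot := mem_closure_iff_clusterPt.mp hq
  have hBF : B ∈ F := mem_inf_of_right (mem_principal_self B)
  obtain ⟨p₀, hp₀⟩ : B.Nonempty := Filter.nonempty_of_mem hBF
  obtain ⟨x₀, -, -⟩ := hp₀
  classical
  set s : Y × Z → X := fun p => if h : p ∈ B then h.choose else x₀ with hsdef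
  have hs : ∀ p ∈ B, p.1 ∈ g (s p) ∧ p.2 ∈ f (s p) := by
    intro p hp
    simp only [hsdef, dif_pos hp]
    exact hp.choose_spec
  set r : ℝ := z0 q.2 + y0 q.1 + 1 with hrdef
  set U : Set (Y × Z) := {p | z0 p.2 + y0 p.1 < r} with hUdef
  have hUopen : IsOpen U :=
    isOpen_lt ((z0.continuous.comp continuous_snd).add
      (y0.continuous.comp continuous_fst)) continuous_const
  have hqU : q ∈ U := by simp only [hUdef, mem_setOf_eq, hrdef]; linarith
  set Kr : Set X := {x : X | eadd (scal z0 (f x)) (scal y0 (g x)) ≤ (r : EReal)} with hKrdef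
  have hBU : ∀ p ∈ B ∩ U, s p ∈ Kr := by
    rintro p ⟨hpB, hpU⟩
    obtain ⟨hg', hf'⟩ := hs p hpB
    have h1 : scal z0 (f (s p)) ≤ ((z0 p.2 : ℝ) : EReal) := iInf₂_le p.2 hf'
    have h2 : scal y0 (g (s p)) ≤ ((y0 p.1 : ℝ) : EReal) := iInf₂_le p.1 hg'
    have ha : scal z0 (f (s p)) ≠ ⊤ := ne_top_of_le_ne_top (EReal.coe_ne_top _) h1
    have hb : scal y0 (g (s p)) ≠ ⊤ := ne_top_of_le_ne_top (EReal.coe_ne_top _) h2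
    have : eadd (scal z0 (f (s p))) (scal y0 (g (s p)))
        = scal z0 (f (s p)) + scal y0 (g (s p)) := by
      simp [eadd, ha, hb]
    rw [hKrdef, mem_setOf_eq, this]
    calc scal z0 (f (s p)) + scal y0 (g (s p))
        ≤ ((z0 p.2 : ℝ) : EReal) + ((y0 p.1 : ℝ) : EReal) := add_le_add h1 h2
      _ = (((z0 p.2 + y0 p.1 : ℝ)) : EReal) := by rw [EReal.coe_add]
      _ ≤ (r : EReal) := by exact_mod_cast (le_of_lt hpU)
  have hBUF : B ∩ U ∈ F := inter_mem hBF (mem_inf_of_left (hUopen.mem_nhds hqU))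
  set G : Filter X := map s F with hGdef
  haveI : G.NeBot := hF.map s
  have hGK : G ≤ 𝓟 Kr := by
    rw [le_principal_iff, hGdef, mem_map]
    exact mem_of_superset hBUF (fun p hp => hBU p hp)
  obtain ⟨x, hxK, hx⟩ := (hK r).exists_clusterPt hGK
  set m : Y × Z → X × (Y × Z) := fun p => (s p, p) with hmdef
  set H : Filter (X × (Y × Z)) := map m F with hHdef
  set A : Set (X × (Y × Z)) := {p | p.2.1 ∈ g p.1 ∧ p.2.2 ∈ f p.1} with hAdef
  have hAclosed : IsClosed A := by
    have h1 : IsClosed ((fun p : X × (Y × Z) => (p.1, p.2.1)) ⁻¹' {q : X × Y | q.2 ∈ g q.1}) :=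
      hgclosed.preimage (continuous_fst.prodMk (continuous_fst.comp continuous_snd))
    have h2 : IsClosed ((fun p : X × (Y × Z) => (p.1, p.2.2)) ⁻¹' {q : X × Z | q.2 ∈ f q.1}) :=
      hfclosed.preimage (continuous_fst.prodMk (continuous_snd.comp continuous_snd))
    exact h1.inter h2
  have hAH : A ∈ H := by
    rw [hHdef, mem_map]
    exact mem_of_superset hBF (fun p hp => hs p hp)
  have hmapfst : map Prod.fst H = G := by
    rw [hHdef, hGdef, map_map]; rfl
  have hmapsnd : map Prod.snd H = F := by
    rw [hHdef, map_map]
    have : (Prod.snd ∘ m) = id := rfl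
    rw [this, map_id]
  have hsnd : H ≤ comap Prod.snd (𝓝 q) := by
    rw [← map_le_iff_le_comap, hmapsnd]
    exact inf_le_left
  have hcl : ClusterPt (x, q) H := by
    rw [ClusterPt]
    have heq : 𝓝 (x, q) ⊓ H = comap Prod.fst (𝓝 x) ⊓ H := by
      rw [nhds_prod_eq, Filter.prod_eq_inf]
      rw [inf_assoc, inf_eq_right.mpr hsnd]
    rw [heq]
    rw [← Filter.map_neBot_iff Prod.fst, Filter.push_pull' Prod.fst H (𝓝 x), hmapfst]
    exact hx
  have : (x, q) ∈ closure A := mem_closure_iff_clusterPt.2 (hcl.mono (le_principal_iff.2 hAH))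
  rw [hAclosed.closure_eq] at this
  exact ⟨x, this.1, this.2⟩

/-- **Strong duality via compactness.** Let `f` and `g` be closed set-valued maps (closed
graphs) with values in `G(Z,C)` and `G(Y,D)` respectively. If there are `z*₀ ∈ C⁺` and
`y*₀ ∈ D⁺` such that all sublevel sets `{x | φ_{f,z*₀}(x) + φ_{g,y*₀}(x) ≤ r}` (`r ∈ ℝ`) are
compact, then the value function `v` is closed (its graph is closed); if, additionally, `f`
and `g` are convex (convex graphs) and some `x` satisfies `0 ∈ g(x)` and `f(x) ≠ ∅`, then
strong duality holds: `v(0) = p = d`. -/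
theorem strong_duality_via_compactness
    (C : Set Z) (hCconv : Convex ℝ C) (hCcone : ∀ t : ℝ, 0 < t → ∀ z ∈ C, t • z ∈ C)
    (hC0 : (0 : Z) ∈ C)
    (D : Set Y) (hDconv : Convex ℝ D) (hDcone : ∀ t : ℝ, 0 < t → ∀ y ∈ D, t • y ∈ D)
    (hD0 : (0 : Y) ∈ D)
    (f : X → Set Z) (g : X → Set Y)
    (hfG : ∀ x, f x = closure (convexHull ℝ (f x + C)))
    (hgG : ∀ x, g x = closure (convexHull ℝ (g x + D)))
    (hfclosed : IsClosed {q : X × Z | q.2 ∈ f q.1})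
    (hgclosed : IsClosed {q : X × Y | q.2 ∈ g q.1})
    (hcompact : ∃ z0 ∈ posDual C, ∃ y0 ∈ posDual D,
        ∀ r : ℝ, IsCompact {x : X | eadd (scal z0 (f x)) (scal y0 (g x)) ≤ (r : EReal)}) :
    IsClosed {q : Y × Z | q.2 ∈ valFn f g q.1} ∧
    ((Convex ℝ {q : X × Z | q.2 ∈ f q.1} ∧ Convex ℝ {q : X × Y | q.2 ∈ g q.1} ∧
        ∃ x : X, (0 : Y) ∈ g x ∧ (f x).Nonempty) →
      valFn f g 0 = ⋂ (y' : Y →L[ℝ] ℝ), ⋂ z' ∈ posDual C \ {0}, dualObj f g y' z') := by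
  
  classical
  set B : Set (Y × Z) := {q | ∃ x, q.1 ∈ g x ∧ q.2 ∈ f x} with hBdef
  have hBclosed : IsClosed B := graphSet_closed hfclosed hgclosed hcompact
  -- slices of B are closed, and valFn is the slice
  have hslice : ∀ y : Y, valFn f g y = {z | (y, z) ∈ B} := by
    intro y
    have hUeq : (⋃ x ∈ {x | y ∈ g x}, f x) = {z | (y, z) ∈ B} := by
      ext z
      simp only [mem_iUnion, mem_setOf_eq, hBdef, exists_prop]
    have hScl : IsClosed {z | (y, z) ∈ B} :=
      hBclosed.preimage (Continuous.prodMk continuous_const continuous_id)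
    rw [valFn, hUeq, hScl.closure_eq]
  constructor
  · -- the graph of the value function is closed: it equals `B`
    have : {q : Y × Z | q.2 ∈ valFn f g q.1} = B := by
      ext q
      rw [mem_setOf_eq, hslice q.1, mem_setOf_eq]
    rw [this]
    exact hBclosed
  · rintro ⟨hfconv, hgconv, x₁, hx₁g, z₁, hz₁⟩
    -- B is convex
    have hBconv : Convex ℝ B := by
      rintro q₁ ⟨xa, hga, hfa⟩ q₂ ⟨xb, hgb, hfb⟩ a b ha hb hab
      have hfa' : ((xa, q₁.2) : X × Z) ∈ {q : X × Z | q.2 ∈ f q.1} := hfa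
      have hfb' : ((xb, q₂.2) : X × Z) ∈ {q : X × Z | q.2 ∈ f q.1} := hfb
      have hga' : ((xa, q₁.1) : X × Y) ∈ {q : X × Y | q.2 ∈ g q.1} := hga
      have hgb' : ((xb, q₂.1) : X × Y) ∈ {q : X × Y | q.2 ∈ g q.1} := hgb
      have hf' := hfconv hfa' hfb' ha hb hab
      have hg' := hgconv hga' hgb' ha hb hab
      refine ⟨a • xa + b • xb, ?_, ?_⟩
      · simpa [Prod.smul_mk, Prod.mk_add_mk] using hg'
      · simpa [Prod.smul_mk, Prod.mk_add_mk] using hf'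
    -- f x absorbs C
    have hfC : ∀ x, ∀ z ∈ f x, ∀ c ∈ C, z + c ∈ f x := by
      intro x z hz c hc
      rw [hfG x]
      exact subset_closure (subset_convexHull ℝ _ (add_mem_add hz hc))
    have hfeas : ((0 : Y), z₁) ∈ B := ⟨x₁, hx₁g, hz₁⟩
    ext zb
    constructor
    · -- weak duality
      intro hzb
      simp only [mem_iInter]
      intro y' z' _
      have hsub : (⋃ x ∈ {x | (0 : Y) ∈ g x}, f x) ⊆ dualObj f g y' z' := by
        intro z hz
        simp only [mem_iUnion, mem_setOf_eq, exists_prop] at hz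
        obtain ⟨x, h0g, hzf⟩ := hz
        refine subset_closure (mem_iUnion.2 ⟨x, ?_⟩)
        refine subset_closure ?_
        have h0S : (0 : Z) ∈ closure (⋃ y ∈ g x, SMap y' z' y) := by
          refine subset_closure (mem_iUnion.2 ⟨0, mem_iUnion.2 ⟨h0g, ?_⟩⟩)
          simp [SMap]
        simpa using add_mem_add hzf h0S
      have : valFn f g 0 ⊆ dualObj f g y' z' :=
        closure_minimal hsub isClosed_closure
      exact this hzb
    · -- strong duality: contrapositive via Hahn-Banach separation
      intro hzb
      by_contra hnot
      rw [hslice 0, mem_setOf_eq] at hnot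
      obtain ⟨Φ, u, hΦx, hΦB⟩ := geometric_hahn_banach_point_closed hBconv hBclosed hnot
      set y' : Y →L[ℝ] ℝ := Φ.comp (ContinuousLinearMap.inl ℝ Y Z) with hy'def
      set z' : Z →L[ℝ] ℝ := Φ.comp (ContinuousLinearMap.inr ℝ Y Z) with hz'def
      have hsplit : ∀ p : Y × Z, Φ p = y' p.1 + z' p.2 := by
        intro p
        have hp : ((p.1, (0 : Z)) + ((0 : Y), p.2)) = p := by simp
        have h2 : y' p.1 + z' p.2 = Φ (p.1, 0) + Φ (0, p.2) := rfl
        rw [h2, ← map_add, hp]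
      have hy0 : y' 0 = 0 := map_zero y'
      -- z' is in the positive dual cone of C
      have hz'C : z' ∈ posDual C := by
        intro c hc
        by_contra hneg
        push_neg at hneg
        have hu1 : u < z' z₁ := by
          have := hΦB _ hfeas
          rwa [hsplit, hy0, zero_add] at this
        set t : ℝ := (z' z₁ - u + 1) / (-(z' c)) with htdef
        have hct : 0 < -(z' c) := by linarith
        have ht : 0 < t := div_pos (by linarith) hct
        have hmem : ((0 : Y), z₁ + t • c) ∈ B :=
          ⟨x₁, hx₁g, hfC x₁ z₁ hz₁ _ (hCcone t ht c hc)⟩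
        have := hΦB _ hmem
        rw [hsplit, hy0, zero_add] at this
        have hz'v : z' (z₁ + t • c) = z' z₁ + t * z' c := by
          rw [map_add, map_smul]; rfl
        have htc : t * z' c = -(z' z₁ - u + 1) := by
          rw [htdef]
          rw [div_mul_eq_mul_div, div_eq_iff hct.ne']
          ring
        rw [hz'v, htc] at this
        linarith
      -- z' separates zb from the lower bound u
      have hzb' : z' zb < u := by
        have : Φ ((0 : Y), zb) = z' zb := by rw [hsplit, hy0, zero_add]
        rwa [this] at hΦx
      -- z' ≠ 0
      have hz'ne : z' ≠ 0 := by
        intro h0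
        have h1 : z' zb = 0 := by rw [h0]; rfl
        have h2 : u < z' z₁ := by
          have := hΦB _ hfeas
          rwa [hsplit, hy0, zero_add] at this
        have h3 : z' z₁ = 0 := by rw [h0]; rfl
        rw [h1] at hzb'
        rw [h3] at h2
        linarith
      -- zb is not in the dual objective at (y', z')
      have hlb : ∀ x : X, ∀ w ∈ f x + closure (⋃ y ∈ g x, SMap y' z' y), u ≤ z' w := by
        intro x w hw
        rw [Set.mem_add] at hw
        obtain ⟨zf, hzf, sb, hsb, rfl⟩ := hw
        have hT : (⋃ y ∈ g x, SMap y' z' y) ⊆ {w | u - z' zf ≤ z' w} := by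
          intro w' hw'
          simp only [mem_iUnion, exists_prop] at hw'
          obtain ⟨y, hy, hw'⟩ := hw'
          have hyB : ((y, zf) : Y × Z) ∈ B := ⟨x, hy, hzf⟩
          have h1 := hΦB _ hyB
          rw [hsplit] at h1
          have : y' y ≤ z' w' := hw'
          simp only [mem_setOf_eq]
          linarith
        have hclosedS : IsClosed {w : Z | u - z' zf ≤ z' w} :=
          isClosed_le continuous_const z'.continuous
        have hsb' : u - z' zf ≤ z' sb := closure_minimal hT hclosedS hsb
        rw [map_add]
        linarith
      have hdual : dualObj f g y' z' ⊆ {w : Z | u ≤ z' w} := by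
        refine closure_minimal (iUnion_subset fun x => ?_)
          (isClosed_le continuous_const z'.continuous)
        exact closure_minimal (hlb x) (isClosed_le continuous_const z'.continuous)
      have hmem : zb ∈ dualObj f g y' z' := by
        have := mem_iInter.1 hzb y'
        have := mem_iInter.1 this z'
        exact mem_iInter.1 this ⟨hz'C, hz'ne⟩
      have := hdual hmem
      rw [mem_setOf_eq] at this
      linarith
end
end

section
/- Let (L, ≤) be a complete lattice, X and V nonempty sets, and l : X × V → L. For subsets X̄ ⊆ X and V̄ ⊆ V, the following are equivalent: (i) for all U ⊆ X and all W ⊆ V: Ľ(X̄,W) ≤ Ľ(X̄,V̄), Ľ(X̄,V̄) = L̂(X̄,V̄), and L̂(X̄,V̄) ≤ L̂(U,V̄); (ii) sup_{v ∈ V̄} d(v) = inf_{x ∈ X̄} p(x). -/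
open Set

/-- In a complete lattice `L`, for `l : X × V → L` with `p(x) = sup_v l(x,v)`,
`d(v) = inf_x l(x,v)`, lower canonical extension `L̂(U,W) = sup_{v ∈ W} inf_{x ∈ U} l(x,v)`
and upper canonical extension `Ľ(U,W) = inf_{x ∈ U} sup_{v ∈ W} l(x,v)` (with `sup ∅ = ⊥`,
`inf ∅ = ⊤`), the following are equivalent for `X̄ ⊆ X`, `V̄ ⊆ V`:
(i) for all `U ⊆ X`, `W ⊆ V`: `Ľ(X̄,W) ≤ Ľ(X̄,V̄) = L̂(X̄,V̄) ≤ L̂(U,V̄)`;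
(ii) `sup_{v ∈ V̄} d(v) = inf_{x ∈ X̄} p(x)`. -/
theorem saddle_condition_iff_infsup {L X V : Type*} [CompleteLattice L]
    [Nonempty X] [Nonempty V] (l : X → V → L) (Xb : Set X) (Vb : Set V) :
    (∀ (U : Set X) (W : Set V),
        (⨅ x ∈ Xb, ⨆ v ∈ W, l x v) ≤ (⨅ x ∈ Xb, ⨆ v ∈ Vb, l x v) ∧
        (⨅ x ∈ Xb, ⨆ v ∈ Vb, l x v) = (⨆ v ∈ Vb, ⨅ x ∈ Xb, l x v) ∧
        (⨆ v ∈ Vb, ⨅ x ∈ Xb, l x v) ≤ (⨆ v ∈ Vb, ⨅ x ∈ U, l x v))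
      ↔ (⨆ v ∈ Vb, ⨅ x : X, l x v) = (⨅ x ∈ Xb, ⨆ v : V, l x v) := by
  have hBA : (⨆ v ∈ Vb, ⨅ x ∈ Xb, l x v) ≤ (⨅ x ∈ Xb, ⨆ v ∈ Vb, l x v) :=
    iSup₂_le fun v hv => le_iInf₂ fun x hx =>
      (iInf₂_le x hx).trans (le_iSup₂_of_le v hv le_rfl)
  have hsd : (⨆ v ∈ Vb, ⨅ x : X, l x v) ≤ ⨆ v ∈ Vb, ⨅ x ∈ Xb, l x v :=
    iSup₂_mono fun v hv => le_iInf₂ fun x hx => iInf_le _ x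
  have hAp : (⨅ x ∈ Xb, ⨆ v ∈ Vb, l x v) ≤ ⨅ x ∈ Xb, ⨆ v : V, l x v :=
    iInf₂_mono fun x hx => iSup₂_le fun v hv => le_iSup _ v
  constructor
  · intro h
    obtain ⟨ha, hb, hc⟩ := h univ univ
    simp only [iSup_univ, iInf_univ] at ha hc
    exact le_antisymm (hsd.trans (hb ▸ hAp)) (ha.trans (hb ▸ hc))
  · intro h U W
    refine ⟨?_, le_antisymm (hAp.trans (h.ge.trans hsd)) hBA, ?_⟩
    · calc (⨅ x ∈ Xb, ⨆ v ∈ W, l x v)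
          ≤ ⨅ x ∈ Xb, ⨆ v : V, l x v :=
            iInf₂_mono fun x hx => iSup₂_le fun v hv => le_iSup _ v
        _ ≤ _ := (h.ge.trans hsd).trans hBA
    · calc (⨆ v ∈ Vb, ⨅ x ∈ Xb, l x v)
          ≤ ⨆ v ∈ Vb, ⨅ x : X, l x v :=
            hBA.trans (hAp.trans h.ge)
        _ ≤ _ := iSup₂_mono fun v hv => le_iInf₂ fun x hx => iInf_le _ x
end
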